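/- arXiv:2502.15166 — 3 statements merged into one kernel-verified Lean document; each statement's English description precedes it below -/
import Mathlib

section
/- Let P_1, ..., P_n be ranked posets each with a unique minimal element. Then the disjoint union of the posets underline(P_i) (each P_i with its least element removed) is Macaulay if and only if the wedge product of the P_i is Macaulay. -/
open Finset

instance {α : Type*} [Fintype α] : Fintype (WithBot α) := inferInstanceAs (Fintype (Option α))
instance {α : Type*} [Fintype α] : Fintype (WithTop α) := inferInstanceAs (Fintype (Option α))

variable {α : Type*}

open Classical in
noncomputable def shadow [PartialOrder α] [Fintype α] (A : Finset α) : Finset α :=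
  Finset.univ.filter (fun b => ∃ a ∈ A, a ⋖ b)

def IsRankFn [PartialOrder α] (rank : α → ℕ) : Prop :=
  (∃ x, rank x = 0 ∧ ∀ y, x ≤ y) ∧ ∀ a b : α, a ⋖ b → rank b = rank a + 1

def IsInitSeg [PartialOrder α] (rank : α → ℕ) (lt : α → α → Prop) (d : ℕ)
    (S : Finset α) : Prop :=
  (∀ x ∈ S, rank x = d) ∧ ∀ a ∈ S, ∀ b, rank b = d → lt a b → b ∈ S

def MacaulayWith [PartialOrder α] [Fintype α] (rank : α → ℕ)
    (lt : α → α → Prop) : Prop :=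
  IsTrichotomous α lt ∧ IsTrans α lt ∧ IsIrrefl α lt ∧
  (∀ d (A S : Finset α), (∀ x ∈ A, rank x = d) → IsInitSeg rank lt d S →
    S.card = A.card → (shadow S).card ≤ (shadow A).card) ∧
  (∀ d (S : Finset α), IsInitSeg rank lt d S → IsInitSeg rank lt (d + 1) (shadow S))

def IsMacaulay [PartialOrder α] [Fintype α] (rank : α → ℕ) : Prop :=
  ∃ lt : α → α → Prop, MacaulayWith rank lt

abbrev Wedge (P Q : Type*) [PartialOrder P] [PartialOrder Q] [OrderBot P] [OrderBot Q] :=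
  WithBot ({p : P // p ≠ ⊥} ⊕ {q : Q // q ≠ ⊥})

def wedgeRank {P Q : Type*} [PartialOrder P] [PartialOrder Q] [OrderBot P] [OrderBot Q]
    (rP : P → ℕ) (rQ : Q → ℕ) : Wedge P Q → ℕ :=
  WithBot.recBotCoe 0 (Sum.elim (fun p => rP p.1) (fun q => rQ q.1))

open Classical in
noncomputable def wedgeInl {P Q : Type*} [PartialOrder P] [PartialOrder Q] [OrderBot P]
    [OrderBot Q] (p : P) : Wedge P Q :=
  if h : p = ⊥ then ⊥ else
    ((Sum.inl ⟨p, h⟩ : {p : P // p ≠ ⊥} ⊕ {q : Q // q ≠ ⊥}) : Wedge P Q)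

open Classical in
noncomputable def wedgeInr {P Q : Type*} [PartialOrder P] [PartialOrder Q] [OrderBot P]
    [OrderBot Q] (q : Q) : Wedge P Q :=
  if h : q = ⊥ then ⊥ else
    ((Sum.inr ⟨q, h⟩ : {p : P // p ≠ ⊥} ⊕ {q : Q // q ≠ ⊥}) : Wedge P Q)

abbrev Diamond (P Q : Type*) [PartialOrder P] [PartialOrder Q] [OrderBot P] [OrderBot Q]
    [OrderTop P] [OrderTop Q] :=
  WithBot (WithTop ({p : P // p ≠ ⊥ ∧ p ≠ ⊤} ⊕ {q : Q // q ≠ ⊥ ∧ q ≠ ⊤}))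

def diamondRank {P Q : Type*} [PartialOrder P] [PartialOrder Q] [OrderBot P] [OrderBot Q]
    [OrderTop P] [OrderTop Q] (rP : P → ℕ) (rQ : Q → ℕ) (s : ℕ) : Diamond P Q → ℕ :=
  WithBot.recBotCoe 0 (WithTop.recTopCoe s (Sum.elim (fun p => rP p.1) (fun q => rQ q.1)))

def diamondInl {P Q : Type*} [PartialOrder P] [PartialOrder Q] [OrderBot P] [OrderBot Q]
    [OrderTop P] [OrderTop Q] (p : {p : P // p ≠ ⊥ ∧ p ≠ ⊤}) : Diamond P Q :=
  (((Sum.inl p : {p : P // p ≠ ⊥ ∧ p ≠ ⊤} ⊕ {q : Q // q ≠ ⊥ ∧ q ≠ ⊤}) :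
    WithTop ({p : P // p ≠ ⊥ ∧ p ≠ ⊤} ⊕ {q : Q // q ≠ ⊥ ∧ q ≠ ⊤})) : Diamond P Q)

abbrev Box (a b : ℕ) := Fin a × Fin b

def boxRank {a b : ℕ} : Box a b → ℕ := fun p => p.1.val + p.2.val

abbrev BoxF {n : ℕ} (d : Fin n → ℕ) := ∀ i, Fin (d i + 1)

def boxFRank {n : ℕ} {d : Fin n → ℕ} : BoxF d → ℕ := fun x => ∑ i, (x i).val

def diamondInr {P Q : Type*} [PartialOrder P] [PartialOrder Q] [OrderBot P] [OrderBot Q]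
    [OrderTop P] [OrderTop Q] (q : {q : Q // q ≠ ⊥ ∧ q ≠ ⊤}) : Diamond P Q :=
  (((Sum.inr q : {p : P // p ≠ ⊥ ∧ p ≠ ⊤} ⊕ {q : Q // q ≠ ⊥ ∧ q ≠ ⊤}) :
    WithTop ({p : P // p ≠ ⊥ ∧ p ≠ ⊤} ⊕ {q : Q // q ≠ ⊥ ∧ q ≠ ⊤})) : Diamond P Q)

abbrev WedgeFam {ι : Type*} (P : ι → Type*) [∀ i, PartialOrder (P i)]
    [∀ i, OrderBot (P i)] :=
  WithBot (Σ i, {p : P i // p ≠ ⊥})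

def wedgeFamRank {ι : Type*} {P : ι → Type*} [∀ i, PartialOrder (P i)]
    [∀ i, OrderBot (P i)] (rank : ∀ i, P i → ℕ) : WedgeFam P → ℕ :=
  WithBot.recBotCoe 0 (fun s => rank s.1 s.2.1)

abbrev DiamondFam {ι : Type*} (P : ι → Type*) [∀ i, PartialOrder (P i)]
    [∀ i, OrderBot (P i)] [∀ i, OrderTop (P i)] :=
  WithBot (WithTop (Σ i, {p : P i // p ≠ ⊥ ∧ p ≠ ⊤}))

def diamondFamRank {ι : Type*} {P : ι → Type*} [∀ i, PartialOrder (P i)]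
    [∀ i, OrderBot (P i)] [∀ i, OrderTop (P i)] (rank : ∀ i, P i → ℕ) (s : ℕ) :
    DiamondFam P → ℕ :=
  WithBot.recBotCoe 0 (WithTop.recTopCoe s (fun x => rank x.1 x.2.1))


section AuxLemmas

variable {γ : Type*} [PartialOrder γ] [Fintype γ]

lemma mem_shadow_iff' {A : Finset γ} {b : γ} : b ∈ _root_.shadow A ↔ ∃ a ∈ A, a ⋖ b := by
  simp [_root_.shadow]

lemma exists_covby_of_lt' {a b : γ} (h : a < b) : ∃ z, a ≤ z ∧ z ⋖ b := by
  classical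
  obtain ⟨z, hz, hmax⟩ := Finset.exists_maximal
    (s := Finset.univ.filter fun w => a ≤ w ∧ w < b) ⟨a, by simp [h]⟩
  simp only [Finset.mem_filter, Finset.mem_univ, true_and] at hz
  refine ⟨z, hz.1, hz.2, fun w hzw hwb => ?_⟩
  exact absurd (hmax (by simp [le_trans hz.1 hzw.le, hwb]) hzw.le) (not_le_of_gt hzw)

lemma rank_lt_of_lt' {rank : γ → ℕ} (hcov : ∀ a b : γ, a ⋖ b → rank b = rank a + 1) :
    ∀ b a : γ, a < b → rank a < rank b := by
  intro b
  induction b using WellFoundedLT.induction with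
  | ind b IH =>
    intro a hab
    obtain ⟨z, haz, hzb⟩ := exists_covby_of_lt' hab
    rcases eq_or_lt_of_le haz with rfl | h
    · rw [hcov _ _ hzb]; omega
    · have := IH z hzb.lt a h
      rw [hcov _ _ hzb]; omega

/-- Lift a strict order on `γ` to `WithBot γ`, with `⊥` smallest. -/
def liftLT (lt : γ → γ → Prop) : WithBot γ → WithBot γ → Prop :=
  fun x y => WithBot.recBotCoe (y ≠ ⊥) (fun a => WithBot.recBotCoe False (fun b => lt a b) y) x

lemma liftLT_bot_bot (lt : γ → γ → Prop) : ¬ liftLT lt (⊥ : WithBot γ) ⊥ := fun h => h rfl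

lemma liftLT_bot_coe (lt : γ → γ → Prop) (b : γ) : liftLT lt ⊥ (b : WithBot γ) :=
  WithBot.coe_ne_bot

lemma liftLT_coe_bot (lt : γ → γ → Prop) (a : γ) : ¬ liftLT lt (a : WithBot γ) ⊥ := fun h => h

lemma liftLT_coe_coe (lt : γ → γ → Prop) (a b : γ) :
    liftLT lt (a : WithBot γ) (b : WithBot γ) ↔ lt a b := Iff.rfl

lemma macaulay_iff_wedge (r : γ → ℕ) (h1 : ∀ x, 1 ≤ r x)
    (hminiff : ∀ b : γ, IsMin b ↔ r b = 1) :
    IsMacaulay (fun x : γ => r x - 1) ↔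
      IsMacaulay (WithBot.recBotCoe 0 r : WithBot γ → ℕ) := by
  classical
  set c : γ → WithBot γ := fun a => (a : WithBot γ) with hc
  set R : WithBot γ → ℕ := WithBot.recBotCoe 0 r with hRdef
  have hRbot : R ⊥ = 0 := rfl
  have hRcoe : ∀ a : γ, R (c a) = r a := fun _ => rfl
  have hR0 : ∀ y : WithBot γ, R y = 0 → y = ⊥ := by
    intro y hy
    cases y with
    | bot => rfl
    | coe a => exact absurd hy (by have := h1 a; rw [hRcoe]; omega)
  have cinj : Function.Injective c := WithBot.coe_injective
  have hmemcoe : ∀ (d : ℕ) (x : WithBot γ), R x = d + 1 → ∃ a : γ, x = c a := by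
    intro d x hx
    cases x with
    | bot => rw [hRbot] at hx; omega
    | coe a => exact ⟨a, rfl⟩
  have hshadow : ∀ T : Finset γ,
      _root_.shadow (T.image c) = (_root_.shadow T).image c := by
    intro T; ext b
    simp only [mem_shadow_iff', Finset.mem_image]
    constructor
    · rintro ⟨a, ⟨a₀, ha₀, rfl⟩, hab⟩
      cases b with
      | bot => exact absurd hab.lt not_lt_bot
      | coe b₀ => exact ⟨b₀, ⟨a₀, ha₀, WithBot.coe_covBy_coe.1 hab⟩, rfl⟩
    · rintro ⟨b₀, ⟨a₀, ha₀, hab⟩, rfl⟩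
      exact ⟨_, ⟨a₀, ha₀, rfl⟩, WithBot.coe_covBy_coe.2 hab⟩
  have hshadow_bot : _root_.shadow ({⊥} : Finset (WithBot γ))
      = Finset.univ.filter (fun b => R b = 1) := by
    ext b
    simp only [mem_shadow_iff', Finset.mem_singleton, Finset.mem_filter, Finset.mem_univ,
      true_and]
    constructor
    · rintro ⟨a, rfl, hab⟩
      cases b with
      | bot => exact absurd hab.lt (lt_irrefl _)
      | coe b₀ => exact (hRcoe b₀).trans ((hminiff b₀).1 (WithBot.bot_covBy_coe.1 hab))
    · intro hb
      cases b with
      | bot => rw [hRbot] at hb; omega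
      | coe b₀ =>
        exact ⟨⊥, rfl, WithBot.bot_covBy_coe.2 ((hminiff b₀).2 ((hRcoe b₀).symm.trans hb))⟩
  constructor
  · rintro ⟨lt, htri, htrans, hirr, hcard, hinit⟩
    refine ⟨liftLT lt, ⟨?_⟩, ⟨?_⟩, ⟨?_⟩, ?_, ?_⟩
    · intro x y
      suffices H : liftLT lt x y ∨ x = y ∨ liftLT lt y x from
        fun h₁ h₂ => (H.resolve_left h₁).resolve_right h₂
      cases x with
      | bot =>
        cases y with
        | bot => exact Or.inr (Or.inl rfl)
        | coe b => exact Or.inl (liftLT_bot_coe lt b)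
      | coe a =>
        cases y with
        | bot => exact Or.inr (Or.inr (liftLT_bot_coe lt a))
        | coe b =>
          rcases @trichotomous_of _ lt htri a b with h | h | h
          · exact Or.inl ((liftLT_coe_coe lt a b).2 h)
          · exact Or.inr (Or.inl (by rw [h]))
          · exact Or.inr (Or.inr ((liftLT_coe_coe lt b a).2 h))
    · intro x y z hxy hyz
      cases x with
      | bot =>
        cases z with
        | bot =>
          cases y with
          | bot => exact absurd hxy (liftLT_bot_bot lt)
          | coe b => exact absurd hyz (liftLT_coe_bot lt b)
        | coe cc => exact liftLT_bot_coe lt cc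
      | coe a =>
        cases y with
        | bot => exact absurd hxy (liftLT_coe_bot lt a)
        | coe b =>
          cases z with
          | bot => exact absurd hyz (liftLT_coe_bot lt b)
          | coe cc =>
            exact (liftLT_coe_coe lt a cc).2
              (htrans.trans a b cc ((liftLT_coe_coe lt a b).1 hxy)
                ((liftLT_coe_coe lt b cc).1 hyz))
    · intro x
      cases x with
      | bot => exact liftLT_bot_bot lt
      | coe a => exact fun h => hirr.irrefl a ((liftLT_coe_coe lt a a).1 h)
    · intro d A S hA hS hcards
      match d with
      | 0 =>
        have hA' : A ⊆ {⊥} := fun x hx => Finset.mem_singleton.2 (hR0 x (hA x hx))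
        have hS' : S ⊆ {⊥} := fun x hx => Finset.mem_singleton.2 (hR0 x (hS.1 x hx))
        have hSA : S = A := by
          rcases Finset.subset_singleton_iff.1 hA' with rfl | rfl <;>
            rcases Finset.subset_singleton_iff.1 hS' with rfl | rfl <;> simp_all
        rw [hSA]
      | (d + 1) =>
        set A₀ := A.preimage c cinj.injOn with hA₀def
        set S₀ := S.preimage c cinj.injOn with hS₀def
        have hAim : A₀.image c = A := by
          rw [hA₀def, Finset.image_preimage]
          refine Finset.filter_true_of_mem fun x hx => ?_
          obtain ⟨a, rfl⟩ := hmemcoe d x (hA x hx)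
          exact ⟨a, rfl⟩
        have hSim : S₀.image c = S := by
          rw [hS₀def, Finset.image_preimage]
          refine Finset.filter_true_of_mem fun x hx => ?_
          obtain ⟨a, rfl⟩ := hmemcoe d x (hS.1 x hx)
          exact ⟨a, rfl⟩
        have hA₀ : ∀ a ∈ A₀, r a - 1 = d := by
          intro a ha
          have h' := hA (c a) (Finset.mem_preimage.1 ha)
          rw [hRcoe] at h'
          show r a - 1 = d
          omega
        have hS₀ : IsInitSeg (fun x : γ => r x - 1) lt d S₀ := by
          constructor
          · intro a ha
            have h' := hS.1 (c a) (Finset.mem_preimage.1 ha)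
            rw [hRcoe] at h'
            show r a - 1 = d
            omega
          · intro a ha b hb hlt
            have hb2 : r b - 1 = d := hb
            have hb' : R (c b) = d + 1 := by rw [hRcoe]; have := h1 b; omega
            exact Finset.mem_preimage.2
              (hS.2 (c a) (Finset.mem_preimage.1 ha) (c b) hb'
                ((liftLT_coe_coe lt a b).2 hlt))
        have hcard₀ : S₀.card = A₀.card := by
          have e1 : A₀.card = A.card := by
            rw [← hAim, Finset.card_image_of_injective _ cinj]
          have e2 : S₀.card = S.card := by
            rw [← hSim, Finset.card_image_of_injective _ cinj]
          omega
        have hmain := hcard d A₀ S₀ hA₀ hS₀ hcard₀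
        rw [← hAim, ← hSim, hshadow, hshadow,
          Finset.card_image_of_injective _ cinj, Finset.card_image_of_injective _ cinj]
        exact hmain
    · intro d S hS
      match d with
      | 0 =>
        have hS' : S ⊆ {⊥} := fun x hx => Finset.mem_singleton.2 (hR0 x (hS.1 x hx))
        rcases Finset.subset_singleton_iff.1 hS' with rfl | rfl
        · constructor
          · intro x hx
            rw [mem_shadow_iff'] at hx
            obtain ⟨a, ha, -⟩ := hx
            exact absurd ha (Finset.notMem_empty a)
          · intro a ha b hb hl
            rw [mem_shadow_iff'] at ha
            obtain ⟨x, hx, -⟩ := ha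
            exact absurd hx (Finset.notMem_empty x)
        · rw [hshadow_bot]
          constructor
          · intro x hx
            exact (Finset.mem_filter.1 hx).2
          · intro a _ b hb _
            exact Finset.mem_filter.2 ⟨Finset.mem_univ _, hb⟩
      | (d + 1) =>
        set S₀ := S.preimage c cinj.injOn with hS₀def
        have hSim : S₀.image c = S := by
          rw [hS₀def, Finset.image_preimage]
          refine Finset.filter_true_of_mem fun x hx => ?_
          obtain ⟨a, rfl⟩ := hmemcoe d x (hS.1 x hx)
          exact ⟨a, rfl⟩
        have hS₀ : IsInitSeg (fun x : γ => r x - 1) lt d S₀ := by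
          constructor
          · intro a ha
            have h' := hS.1 (c a) (Finset.mem_preimage.1 ha)
            rw [hRcoe] at h'
            show r a - 1 = d
            omega
          · intro a ha b hb hlt
            have hb2 : r b - 1 = d := hb
            have hb' : R (c b) = d + 1 := by rw [hRcoe]; have := h1 b; omega
            exact Finset.mem_preimage.2
              (hS.2 (c a) (Finset.mem_preimage.1 ha) (c b) hb'
                ((liftLT_coe_coe lt a b).2 hlt))
        have hmain := hinit d S₀ hS₀
        rw [← hSim, hshadow]
        constructor
        · intro x hx
          obtain ⟨b, hb, rfl⟩ := Finset.mem_image.1 hx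
          have h' : r b - 1 = d + 1 := hmain.1 b hb
          rw [hRcoe]
          have := h1 b
          omega
        · intro a ha b hb hl
          obtain ⟨a₀, ha₀, rfl⟩ := Finset.mem_image.1 ha
          obtain ⟨b₀, rfl⟩ := hmemcoe (d + 1) b hb
          have hb₀ : r b₀ - 1 = d + 1 := by
            rw [hRcoe] at hb
            have := h1 b₀
            omega
          exact Finset.mem_image.2
            ⟨b₀, hmain.2 a₀ ha₀ b₀ hb₀ ((liftLT_coe_coe lt a₀ b₀).1 hl), rfl⟩
  · rintro ⟨lt', htri, htrans, hirr, hcard, hinit⟩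
    set lt₀ : γ → γ → Prop := fun a b => lt' (c a) (c b) with hlt₀
    have himg : ∀ (d : ℕ) (S : Finset γ), IsInitSeg (fun x : γ => r x - 1) lt₀ d S →
        IsInitSeg R lt' (d + 1) (S.image c) := by
      intro d S hS
      constructor
      · intro x hx
        obtain ⟨a, ha, rfl⟩ := Finset.mem_image.1 hx
        have h2 : r a - 1 = d := hS.1 a ha
        have := h1 a
        rw [hRcoe]
        omega
      · intro x hx b hb hl
        obtain ⟨a, ha, rfl⟩ := Finset.mem_image.1 hx
        obtain ⟨b₀, rfl⟩ := hmemcoe d b hb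
        have hb₀ : r b₀ - 1 = d := by
          rw [hRcoe] at hb
          have := h1 b₀
          omega
        exact Finset.mem_image.2 ⟨b₀, hS.2 a ha b₀ hb₀ hl, rfl⟩
    refine ⟨lt₀, ⟨?_⟩, ⟨?_⟩, ⟨?_⟩, ?_, ?_⟩
    · intro a b
      suffices H : lt₀ a b ∨ a = b ∨ lt₀ b a from
        fun h₁ h₂ => (H.resolve_left h₁).resolve_right h₂
      rcases @trichotomous_of _ lt' htri (c a) (c b) with h | h | h
      · exact Or.inl h
      · exact Or.inr (Or.inl (cinj h))
      · exact Or.inr (Or.inr h)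
    · intro a b cc hab hbc
      exact htrans.trans _ _ _ hab hbc
    · intro a
      exact hirr.irrefl (c a)
    · intro d A S hA hS hcards
      have hA' : ∀ x ∈ A.image c, R x = d + 1 := by
        intro x hx
        obtain ⟨a, ha, rfl⟩ := Finset.mem_image.1 hx
        have h2 : r a - 1 = d := hA a ha
        have := h1 a
        rw [hRcoe]
        omega
      have hS' := himg d S hS
      have hc' : (S.image c).card = (A.image c).card := by
        rw [Finset.card_image_of_injective _ cinj, Finset.card_image_of_injective _ cinj,
          hcards]
      have hmain := hcard (d + 1) (A.image c) (S.image c) hA' hS' hc'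
      rw [hshadow, hshadow, Finset.card_image_of_injective _ cinj,
        Finset.card_image_of_injective _ cinj] at hmain
      exact hmain
    · intro d S hS
      have hmain := hinit (d + 1) (S.image c) (himg d S hS)
      rw [hshadow] at hmain
      constructor
      · intro b hb
        have h' := hmain.1 (c b) (Finset.mem_image_of_mem c hb)
        rw [hRcoe] at h'
        have := h1 b
        show r b - 1 = d + 1
        omega
      · intro a ha b hb hl
        have hb2 : r b - 1 = d + 1 := hb
        have hb' : R (c b) = d + 1 + 1 := by
          rw [hRcoe]
          have := h1 b
          omega
        have hmem := hmain.2 (c a) (Finset.mem_image_of_mem c ha) (c b) hb' hl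
        obtain ⟨b', hb'', he⟩ := Finset.mem_image.1 hmem
        rwa [← cinj he]

end AuxLemmas

/-- The disjoint union of the posets `P i` with their bottoms removed is Macaulay iff the
wedge product of the `P i` is Macaulay. -/
theorem stmt2 {n : ℕ} (P : Fin n → Type*) [∀ i, PartialOrder (P i)]
    [∀ i, OrderBot (P i)] [∀ i, Fintype (P i)] [∀ i, DecidableEq (P i)]
    (rank : ∀ i, P i → ℕ) (hr : ∀ i, IsRankFn (rank i)) :
    IsMacaulay (fun x : Σ i, {p : P i // p ≠ ⊥} => rank x.1 x.2.1 - 1) ↔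
    IsMacaulay (wedgeFamRank rank) := by
  classical
  have h1 : ∀ x : Σ i, {p : P i // p ≠ ⊥}, 1 ≤ rank x.1 x.2.1 := by
    intro x
    obtain ⟨⟨m, hm0, hml⟩, hcov⟩ := hr x.1
    have hm : m = ⊥ := le_antisymm (hml ⊥) bot_le
    rw [hm] at hm0
    have hbl : (⊥ : P x.1) < x.2.1 := bot_lt_iff_ne_bot.2 x.2.2
    have := rank_lt_of_lt' hcov x.2.1 ⊥ hbl
    omega
  have hltσ : ∀ a b : (Σ i, {p : P i // p ≠ ⊥}), a < b →
      rank a.1 a.2.1 < rank b.1 b.2.1 := by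
    intro a b hab
    obtain ⟨i, x, y, hxy⟩ := hab
    exact rank_lt_of_lt' (hr i).2 y.1 x.1 (Subtype.coe_lt_coe.2 hxy)
  have hminiff : ∀ b : Σ i, {p : P i // p ≠ ⊥}, IsMin b ↔ rank b.1 b.2.1 = 1 := by
    rintro ⟨i, p⟩
    obtain ⟨⟨m, hm0, hml⟩, hcov⟩ := hr i
    have hm : m = ⊥ := le_antisymm (hml ⊥) bot_le
    rw [hm] at hm0
    constructor
    · intro hmin
      by_contra hne
      have h2 : 2 ≤ rank i p.1 := by
        have h1' : 1 ≤ rank i p.1 := h1 ⟨i, p⟩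
        have hne' : rank i p.1 ≠ 1 := hne
        omega
      have hbl : (⊥ : P i) < p.1 := bot_lt_iff_ne_bot.2 p.2
      obtain ⟨z, -, hz⟩ := exists_covby_of_lt' hbl
      have hrz : rank i p.1 = rank i z + 1 := hcov z p.1 hz
      have hz0 : z ≠ ⊥ := by
        intro h
        rw [h] at hrz
        omega
      have hlt : (⟨i, ⟨z, hz0⟩⟩ : Σ j, {q : P j // q ≠ ⊥}) < ⟨i, p⟩ :=
        Sigma.mk_lt_mk_iff.2 (Subtype.mk_lt_mk.2 hz.lt)
      exact hmin.not_lt hlt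
    · intro hrk
      rw [isMin_iff_forall_not_lt]
      intro cc hc
      have h' := hltσ cc ⟨i, p⟩ hc
      have := h1 cc
      simp only at h' hrk
      omega
  exact macaulay_iff_wedge (fun x : Σ i, {p : P i // p ≠ ⊥} => rank x.1 x.2.1) h1 hminiff
end

section
/- Let P be an n-dimensional box poset and Q an m-dimensional box poset of the same rank with m <= n - 2. Then the diamond product of P and Q is not Macaulay. -/
open Finset

variable {α : Type*}

namespace Stmt10Aux

open Finset

section Box

variable {k : ℕ} {f : Fin k → ℕ}

lemma fin_bot_val (t : ℕ) : ((⊥ : Fin (t+1)) : ℕ) = 0 := rfl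
lemma fin_top_val (t : ℕ) : ((⊤ : Fin (t+1)) : ℕ) = t := rfl

lemma box_le_iff (x y : BoxF f) : x ≤ y ↔ ∀ i, (x i : ℕ) ≤ (y i : ℕ) := by
  rw [Pi.le_def]; exact forall_congr' fun i => Fin.le_def

lemma box_lt_iff (x y : BoxF f) : x < y ↔ x ≤ y ∧ ∃ i, (x i : ℕ) < (y i : ℕ) := by
  rw [Pi.lt_def]
  refine and_congr (box_le_iff x y) (exists_congr fun i => Fin.lt_def)

lemma box_bot_apply (i : Fin k) : ((⊥ : BoxF f) i : ℕ) = 0 := rfl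

lemma box_top_apply (i : Fin k) : ((⊤ : BoxF f) i : ℕ) = f i := rfl

lemma box_ext {x y : BoxF f} (h : ∀ i, (x i : ℕ) = (y i : ℕ)) : x = y :=
  funext fun i => Fin.ext (h i)

lemma boxFRank_def (x : BoxF f) : boxFRank x = ∑ i, (x i : ℕ) := rfl

lemma boxFRank_le (x : BoxF f) : boxFRank x ≤ ∑ i, f i :=
  Finset.sum_le_sum fun i _ => Fin.is_le (x i)

lemma boxFRank_bot : boxFRank (⊥ : BoxF f) = 0 :=
  Finset.sum_eq_zero fun i _ => box_bot_apply i

lemma boxFRank_top : boxFRank (⊤ : BoxF f) = ∑ i, f i := by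
  rw [boxFRank_def]; exact Finset.sum_congr rfl fun i _ => box_top_apply i

lemma boxFRank_eq_zero_iff (x : BoxF f) : boxFRank x = 0 ↔ x = ⊥ := by
  constructor
  · intro h
    rw [boxFRank_def, Finset.sum_eq_zero_iff] at h
    exact box_ext fun i => by rw [box_bot_apply]; exact h i (mem_univ i)
  · rintro rfl; exact boxFRank_bot

lemma boxFRank_eq_top_iff (x : BoxF f) : boxFRank x = ∑ i, f i ↔ x = ⊤ := by
  constructor
  · intro h
    refine box_ext fun i => le_antisymm (Fin.is_le _) ?_
    rw [box_top_apply]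
    by_contra hlt
    push_neg at hlt
    have : boxFRank x < ∑ i, f i :=
      Finset.sum_lt_sum (fun j _ => Fin.is_le _) ⟨i, mem_univ i, hlt⟩
    omega
  · rintro rfl; exact boxFRank_top

lemma boxFRank_mono {x y : BoxF f} (h : x ≤ y) : boxFRank x ≤ boxFRank y :=
  Finset.sum_le_sum fun i _ => (box_le_iff x y).1 h i

lemma boxFRank_strict_mono {x y : BoxF f} (h : x < y) : boxFRank x < boxFRank y := by
  obtain ⟨hle, i, hi⟩ := (box_lt_iff x y).1 h
  exact Finset.sum_lt_sum (fun j _ => (box_le_iff x y).1 hle j) ⟨i, mem_univ i, hi⟩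

/-- bump coordinate `i` of `x` up by one (requires room). -/
noncomputable def bump (x : BoxF f) (i : Fin k) : BoxF f :=
  fun j => if h : j = i then ⟨min ((x i : ℕ) + 1) (f j), by omega⟩ else x j

lemma bump_apply_self (x : BoxF f) (i : Fin k) (h : (x i : ℕ) < f i) :
    ((bump x i) i : ℕ) = (x i : ℕ) + 1 := by
  simp [bump]; omega

lemma bump_apply_ne (x : BoxF f) {i j : Fin k} (h : j ≠ i) : ((bump x i) j : ℕ) = x j := by
  simp [bump, h]

lemma boxFRank_bump (x : BoxF f) (i : Fin k) (h : (x i : ℕ) < f i) :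
    boxFRank (bump x i) = boxFRank x + 1 := by
  rw [boxFRank_def, boxFRank_def]
  have : ∀ j, ((bump x i) j : ℕ) = (x j : ℕ) + (if j = i then 1 else 0) := by
    intro j
    by_cases hj : j = i
    · subst hj; rw [bump_apply_self x j h]; simp
    · rw [bump_apply_ne x hj]; simp [hj]
  rw [Finset.sum_congr rfl fun j _ => this j, Finset.sum_add_distrib]
  simp

lemma le_bump (x : BoxF f) (i : Fin k) : x ≤ bump x i := by
  rw [box_le_iff]
  intro j
  by_cases hj : j = i
  · subst hj; simp [bump]; omega
  · rw [bump_apply_ne x hj]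

lemma box_between {x y : BoxF f} (hlt : x < y) (hr : boxFRank x + 2 ≤ boxFRank y) :
    ∃ z, x < z ∧ z < y := by
  obtain ⟨hle, i, hi⟩ := (box_lt_iff x y).1 hlt
  have hroom : (x i : ℕ) < f i := lt_of_lt_of_le hi (Fin.is_le (y i))
  have hrk := boxFRank_bump x i hroom
  refine ⟨bump x i, lt_of_le_of_ne (le_bump x i) fun hc => ?_, lt_of_le_of_ne ?_ fun hc => ?_⟩
  · rw [← hc] at hrk; omega
  · rw [box_le_iff]
    intro j
    by_cases hj : j = i
    · subst hj; rw [bump_apply_self x j hroom]; omega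
    · rw [bump_apply_ne x hj]; exact (box_le_iff x y).1 hle j
  · rw [hc] at hrk; omega

noncomputable def drop (x : BoxF f) (i : Fin k) : BoxF f :=
  fun j => if h : j = i then ⟨min ((x i : ℕ) - 1) (f j), by omega⟩ else x j

lemma drop_apply_self (x : BoxF f) (i : Fin k) : ((drop x i) i : ℕ) = (x i : ℕ) - 1 := by
  have := Fin.is_le (x i); simp [drop]; try omega

lemma drop_apply_ne (x : BoxF f) {i j : Fin k} (h : j ≠ i) : ((drop x i) j : ℕ) = x j := by
  simp [drop, h]

lemma drop_le (x : BoxF f) (i : Fin k) : drop x i ≤ x := by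
  rw [box_le_iff]
  intro j
  by_cases hj : j = i
  · subst hj; rw [drop_apply_self]; omega
  · rw [drop_apply_ne x hj]

lemma boxFRank_drop (x : BoxF f) (i : Fin k) (h : 0 < (x i : ℕ)) :
    boxFRank (drop x i) + 1 = boxFRank x := by
  rw [boxFRank_def, boxFRank_def]
  have key : ∀ j, ((x j : ℕ)) = ((drop x i) j : ℕ) + (if j = i then 1 else 0) := by
    intro j
    by_cases hj : j = i
    · subst hj; rw [drop_apply_self]; simp; omega
    · rw [drop_apply_ne x hj]; simp [hj]
  rw [Finset.sum_congr rfl fun j _ => key j, Finset.sum_add_distrib]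
  simp [add_assoc]

lemma box_down {x : BoxF f} (h : 0 < boxFRank x) :
    ∃ y, y ≤ x ∧ boxFRank y + 1 = boxFRank x := by
  obtain ⟨i, hi⟩ : ∃ i, 0 < (x i : ℕ) := by
    by_contra hc; push_neg at hc
    rw [boxFRank_def] at h
    have : ∑ i, (x i : ℕ) = 0 := Finset.sum_eq_zero fun i _ => by have := hc i; omega
    omega
  exact ⟨drop x i, drop_le x i, boxFRank_drop x i hi⟩

lemma box_up {x : BoxF f} (h : boxFRank x < ∑ i, f i) :
    ∃ y, x ≤ y ∧ boxFRank y = boxFRank x + 1 := by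
  obtain ⟨i, hi⟩ : ∃ i, (x i : ℕ) < f i := by
    by_contra hc; push_neg at hc
    have : x = ⊤ := box_ext fun i => by
      have h1 := hc i; have h2 := Fin.is_le (x i); rw [box_top_apply]; omega
    rw [this, boxFRank_top] at h; omega
  exact ⟨bump x i, le_bump x i, boxFRank_bump x i hi⟩

end Box

end Stmt10Aux
namespace Stmt10Aux

open Finset

section Diamond

variable {n m : ℕ} {d : Fin n → ℕ} {e : Fin m → ℕ}

/-- the top element of the diamond, as a `WithBot (WithTop _)` coercion -/
def dTop : Diamond (BoxF d) (BoxF e) :=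
  ((⊤ : WithTop ({p : BoxF d // p ≠ ⊥ ∧ p ≠ ⊤} ⊕ {q : BoxF e // q ≠ ⊥ ∧ q ≠ ⊤})) :
    Diamond (BoxF d) (BoxF e))

open Classical in
noncomputable def midP (d : Fin n → ℕ) (e : Fin m → ℕ) (p : BoxF d) :
    Diamond (BoxF d) (BoxF e) :=
  if h1 : p = ⊥ then ⊥ else if h2 : p = ⊤ then dTop else diamondInl ⟨p, h1, h2⟩

open Classical in
noncomputable def midQ (d : Fin n → ℕ) (e : Fin m → ℕ) (q : BoxF e) :
    Diamond (BoxF d) (BoxF e) :=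
  if h1 : q = ⊥ then ⊥ else if h2 : q = ⊤ then dTop else diamondInr ⟨q, h1, h2⟩

lemma midP_bot : midP d e (⊥ : BoxF d) = ⊥ := by simp [midP]

lemma midP_top (hS : (⊥ : BoxF d) ≠ ⊤) : midP d e (⊤ : BoxF d) = dTop := by
  rw [midP, dif_neg (Ne.symm hS), dif_pos rfl]

lemma midQ_bot : midQ d e (⊥ : BoxF e) = ⊥ := by simp [midQ]

lemma midQ_top (hS : (⊥ : BoxF e) ≠ ⊤) : midQ d e (⊤ : BoxF e) = dTop := by
  rw [midQ, dif_neg (Ne.symm hS), dif_pos rfl]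

lemma midP_mid {p : BoxF d} (h1 : p ≠ ⊥) (h2 : p ≠ ⊤) :
    midP d e p = diamondInl ⟨p, h1, h2⟩ := by
  rw [midP, dif_neg h1, dif_neg h2]

lemma midQ_mid {q : BoxF e} (h1 : q ≠ ⊥) (h2 : q ≠ ⊤) :
    midQ d e q = diamondInr ⟨q, h1, h2⟩ := by
  rw [midQ, dif_neg h1, dif_neg h2]

lemma bot_ne_dTop (hS : (⊥ : BoxF d) ≠ ⊤) : (⊥ : Diamond (BoxF d) (BoxF e)) ≠ dTop := by
  simp [dTop]

lemma coe_ne_bot (x : WithTop ({p : BoxF d // p ≠ ⊥ ∧ p ≠ ⊤} ⊕ {q : BoxF e // q ≠ ⊥ ∧ q ≠ ⊤})) :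
    (x : Diamond (BoxF d) (BoxF e)) ≠ ⊥ := WithBot.coe_ne_bot

lemma inl_ne_dTop (a : {p : BoxF d // p ≠ ⊥ ∧ p ≠ ⊤}) : diamondInl (Q := BoxF e) a ≠ dTop := by
  simp [diamondInl, dTop]

lemma inr_ne_dTop (a : {q : BoxF e // q ≠ ⊥ ∧ q ≠ ⊤}) : diamondInr (P := BoxF d) a ≠ dTop := by
  simp [diamondInr, dTop]

lemma inl_ne_inr (a : {p : BoxF d // p ≠ ⊥ ∧ p ≠ ⊤}) (b : {q : BoxF e // q ≠ ⊥ ∧ q ≠ ⊤}) :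
    diamondInl a ≠ diamondInr b := by
  simp [diamondInl, diamondInr]

lemma inl_le_inl_iff (a b : {p : BoxF d // p ≠ ⊥ ∧ p ≠ ⊤}) :
    diamondInl (Q := BoxF e) a ≤ diamondInl b ↔ a.1 ≤ b.1 := by
  rw [diamondInl, diamondInl, WithBot.coe_le_coe, WithTop.coe_le_coe, Sum.inl_le_inl_iff,
    Subtype.coe_le_coe]

lemma inr_le_inr_iff (a b : {q : BoxF e // q ≠ ⊥ ∧ q ≠ ⊤}) :
    diamondInr (P := BoxF d) a ≤ diamondInr b ↔ a.1 ≤ b.1 := by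
  rw [diamondInr, diamondInr, WithBot.coe_le_coe, WithTop.coe_le_coe, Sum.inr_le_inr_iff,
    Subtype.coe_le_coe]

lemma not_inl_le_inr (a : {p : BoxF d // p ≠ ⊥ ∧ p ≠ ⊤}) (b : {q : BoxF e // q ≠ ⊥ ∧ q ≠ ⊤}) :
    ¬ diamondInl a ≤ diamondInr b := by
  rw [diamondInl, diamondInr, WithBot.coe_le_coe, WithTop.coe_le_coe]
  exact Sum.not_inl_le_inr

lemma not_inr_le_inl (a : {p : BoxF d // p ≠ ⊥ ∧ p ≠ ⊤}) (b : {q : BoxF e // q ≠ ⊥ ∧ q ≠ ⊤}) :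
    ¬ diamondInr b ≤ diamondInl a := by
  rw [diamondInl, diamondInr, WithBot.coe_le_coe, WithTop.coe_le_coe]
  exact Sum.not_inr_le_inl

lemma le_dTop (x : Diamond (BoxF d) (BoxF e)) : x ≤ dTop := by
  cases x with
  | none => exact bot_le
  | some y => rw [dTop]; exact WithBot.coe_le_coe.2 le_top

lemma not_dTop_le_inl (a : {p : BoxF d // p ≠ ⊥ ∧ p ≠ ⊤}) :
    ¬ dTop ≤ diamondInl (Q := BoxF e) a := by
  rw [dTop, diamondInl, WithBot.coe_le_coe]
  simp

lemma not_dTop_le_inr (a : {q : BoxF e // q ≠ ⊥ ∧ q ≠ ⊤}) :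
    ¬ dTop ≤ diamondInr (P := BoxF d) a := by
  rw [dTop, diamondInr, WithBot.coe_le_coe]
  simp

lemma not_inl_le_bot (a : {p : BoxF d // p ≠ ⊥ ∧ p ≠ ⊤}) :
    ¬ diamondInl (Q := BoxF e) a ≤ ⊥ := by
  simp [diamondInl]

lemma not_inr_le_bot (a : {q : BoxF e // q ≠ ⊥ ∧ q ≠ ⊤}) :
    ¬ diamondInr (P := BoxF d) a ≤ ⊥ := by
  simp [diamondInr]

lemma not_dTop_le_bot (hS : (⊥ : BoxF d) ≠ ⊤) : ¬ (dTop : Diamond (BoxF d) (BoxF e)) ≤ ⊥ := by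
  simp [dTop]

end Diamond

end Stmt10Aux
namespace Stmt10Aux

open Finset

section Diamond2

variable {n m : ℕ} {d : Fin n → ℕ} {e : Fin m → ℕ}

lemma box_bot_ne_top {k : ℕ} {f : Fin k → ℕ} (h : 0 < ∑ i, f i) : (⊥ : BoxF f) ≠ ⊤ := by
  intro hc
  have := boxFRank_bot (f := f)
  rw [hc, boxFRank_top] at this
  omega

noncomputable def rkD (d : Fin n → ℕ) (e : Fin m → ℕ) : Diamond (BoxF d) (BoxF e) → ℕ :=
  diamondRank boxFRank boxFRank (∑ i, d i)

lemma rk_bot : rkD d e ⊥ = 0 := rfl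

lemma rk_dTop : rkD d e dTop = ∑ i, d i := rfl

lemma rk_inl (a : {p : BoxF d // p ≠ ⊥ ∧ p ≠ ⊤}) :
    rkD d e (diamondInl a) = boxFRank a.1 := rfl

lemma rk_inr (a : {q : BoxF e // q ≠ ⊥ ∧ q ≠ ⊤}) :
    rkD d e (diamondInr a) = boxFRank a.1 := rfl

lemma rk_midP (p : BoxF d) : rkD d e (midP d e p) = boxFRank p := by
  by_cases h1 : p = ⊥
  · subst h1; rw [midP_bot, rk_bot, boxFRank_bot]
  by_cases h2 : p = ⊤
  · subst h2
    rw [midP, dif_neg h1, dif_pos rfl, rk_dTop, boxFRank_top]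
  · rw [midP_mid h1 h2, rk_inl]

lemma rk_midQ (hs : ∑ i, d i = ∑ i, e i) (q : BoxF e) :
    rkD d e (midQ d e q) = boxFRank q := by
  by_cases h1 : q = ⊥
  · subst h1; rw [midQ_bot, rk_bot, boxFRank_bot]
  by_cases h2 : q = ⊤
  · subst h2
    rw [midQ, dif_neg h1, dif_pos rfl, rk_dTop, boxFRank_top, hs]
  · rw [midQ_mid h1 h2, rk_inr]

lemma rk_le (hs : ∑ i, d i = ∑ i, e i) (x : Diamond (BoxF d) (BoxF e)) :
    rkD d e x ≤ ∑ i, d i := by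
  cases x with
  | none => exact Nat.zero_le _
  | some y =>
    cases y with
    | top => exact le_of_eq rk_dTop
    | coe z =>
      rcases z with a | b
      · exact le_trans (le_of_eq (rk_inl a)) (boxFRank_le a.1)
      · have h1 := boxFRank_le b.1
        have h2 : rkD d e (some (WithTop.some (Sum.inr b))) = boxFRank b.1 := rk_inr b
        omega

lemma midP_of_ne_bot {p : BoxF d} (h1 : p ≠ ⊥) (h2 : p = ⊤) : midP d e p = dTop := by
  subst h2; rw [midP, dif_neg h1, dif_pos rfl]

lemma midQ_of_ne_bot {q : BoxF e} (h1 : q ≠ ⊥) (h2 : q = ⊤) : midQ d e q = dTop := by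
  subst h2; rw [midQ, dif_neg h1, dif_pos rfl]

lemma diamondInl_inj {a b : {p : BoxF d // p ≠ ⊥ ∧ p ≠ ⊤}}
    (h : diamondInl (Q := BoxF e) a = diamondInl b) : a = b := by
  rw [diamondInl, diamondInl] at h
  exact Sum.inl_injective (WithTop.coe_injective (WithBot.coe_injective h))

lemma diamondInr_inj {a b : {q : BoxF e // q ≠ ⊥ ∧ q ≠ ⊤}}
    (h : diamondInr (P := BoxF d) a = diamondInr b) : a = b := by
  rw [diamondInr, diamondInr] at h
  exact Sum.inr_injective (WithTop.coe_injective (WithBot.coe_injective h))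

lemma midP_inj {p p' : BoxF d} (h : midP d e p = midP d e p') : p = p' := by
  by_cases h1 : p = ⊥ <;> by_cases h1' : p' = ⊥
  · rw [h1, h1']
  · exfalso; rw [h1, midP_bot] at h
    by_cases h2' : p' = ⊤
    · rw [midP_of_ne_bot h1' h2'] at h
      exact (coe_ne_bot _) h.symm
    · rw [midP_mid h1' h2'] at h
      exact (coe_ne_bot _) h.symm
  · exfalso; rw [h1', midP_bot] at h
    by_cases h2 : p = ⊤
    · rw [midP_of_ne_bot h1 h2] at h
      exact (coe_ne_bot _) h
    · rw [midP_mid h1 h2] at h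
      exact (coe_ne_bot _) h
  · by_cases h2 : p = ⊤ <;> by_cases h2' : p' = ⊤
    · rw [h2, h2']
    · exfalso
      rw [midP_of_ne_bot h1 h2, midP_mid h1' h2'] at h
      exact inl_ne_dTop _ h.symm
    · exfalso
      rw [midP_of_ne_bot h1' h2', midP_mid h1 h2] at h
      exact inl_ne_dTop _ h
    · rw [midP_mid h1 h2, midP_mid h1' h2'] at h
      exact congrArg Subtype.val (diamondInl_inj h)

lemma midQ_inj {q q' : BoxF e} (h : midQ d e q = midQ d e q') : q = q' := by
  by_cases h1 : q = ⊥ <;> by_cases h1' : q' = ⊥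
  · rw [h1, h1']
  · exfalso; rw [h1, midQ_bot] at h
    by_cases h2' : q' = ⊤
    · rw [midQ_of_ne_bot h1' h2'] at h
      exact (coe_ne_bot _) h.symm
    · rw [midQ_mid h1' h2'] at h
      exact (coe_ne_bot _) h.symm
  · exfalso; rw [h1', midQ_bot] at h
    by_cases h2 : q = ⊤
    · rw [midQ_of_ne_bot h1 h2] at h
      exact (coe_ne_bot _) h
    · rw [midQ_mid h1 h2] at h
      exact (coe_ne_bot _) h
  · by_cases h2 : q = ⊤ <;> by_cases h2' : q' = ⊤
    · rw [h2, h2']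
    · exfalso
      rw [midQ_of_ne_bot h1 h2, midQ_mid h1' h2'] at h
      exact inr_ne_dTop _ h.symm
    · exfalso
      rw [midQ_of_ne_bot h1' h2', midQ_mid h1 h2] at h
      exact inr_ne_dTop _ h
    · rw [midQ_mid h1 h2, midQ_mid h1' h2'] at h
      exact congrArg Subtype.val (diamondInr_inj h)

lemma exists_mid (hP : (⊥ : BoxF d) ≠ ⊤) (hQ : (⊥ : BoxF e) ≠ ⊤)
    (x : Diamond (BoxF d) (BoxF e)) :
    (∃ p, x = midP d e p) ∨ (∃ q, x = midQ d e q) := by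
  cases x with
  | none => exact Or.inl ⟨⊥, midP_bot.symm⟩
  | some y =>
    cases y with
    | top => exact Or.inl ⟨⊤, (midP_top hP).symm⟩
    | coe z =>
      cases z with
      | inl a =>
        refine Or.inl ⟨a.1, ?_⟩
        rw [midP_mid a.2.1 a.2.2]
        rfl
      | inr b =>
        refine Or.inr ⟨b.1, ?_⟩
        rw [midQ_mid b.2.1 b.2.2]
        rfl

lemma midP_le_midP (hP : (⊥ : BoxF d) ≠ ⊤) {p p' : BoxF d} :
    midP d e p ≤ midP d e p' ↔ p ≤ p' := by
  by_cases h1 : p = ⊥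
  · subst h1; rw [midP_bot]; simp
  by_cases h1' : p' = ⊥
  · subst h1'; rw [midP_bot]
    constructor
    · intro h
      exfalso
      by_cases h2 : p = ⊤
      · rw [midP_of_ne_bot h1 h2] at h
        exact (by simp [dTop] : ¬ (dTop : Diamond (BoxF d) (BoxF e)) ≤ ⊥) h
      · rw [midP_mid h1 h2] at h
        exact not_inl_le_bot _ h
    · intro h; exact absurd (le_bot_iff.1 h) h1
  by_cases h2 : p = ⊤
  · rw [midP_of_ne_bot h1 h2, h2]
    constructor
    · intro h
      by_cases h2' : p' = ⊤
      · rw [h2']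
      · exfalso
        rw [midP_mid h1' h2'] at h
        exact not_dTop_le_inl _ h
    · intro h
      have : p' = ⊤ := top_le_iff.1 h
      rw [midP_of_ne_bot h1' this]
  by_cases h2' : p' = ⊤
  · rw [midP_of_ne_bot h1' h2', h2']
    simp [le_dTop, le_top]
  · rw [midP_mid h1 h2, midP_mid h1' h2', inl_le_inl_iff]

lemma midQ_le_midQ (hQ : (⊥ : BoxF e) ≠ ⊤) {q q' : BoxF e} :
    midQ d e q ≤ midQ d e q' ↔ q ≤ q' := by
  by_cases h1 : q = ⊥
  · subst h1; rw [midQ_bot]; simp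
  by_cases h1' : q' = ⊥
  · subst h1'; rw [midQ_bot]
    constructor
    · intro h
      exfalso
      by_cases h2 : q = ⊤
      · rw [midQ_of_ne_bot h1 h2] at h
        exact (by simp [dTop] : ¬ (dTop : Diamond (BoxF d) (BoxF e)) ≤ ⊥) h
      · rw [midQ_mid h1 h2] at h
        exact not_inr_le_bot _ h
    · intro h; exact absurd (le_bot_iff.1 h) h1
  by_cases h2 : q = ⊤
  · rw [midQ_of_ne_bot h1 h2, h2]
    constructor
    · intro h
      by_cases h2' : q' = ⊤
      · rw [h2']
      · exfalso
        rw [midQ_mid h1' h2'] at h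
        exact not_dTop_le_inr _ h
    · intro h
      have : q' = ⊤ := top_le_iff.1 h
      rw [midQ_of_ne_bot h1' this]
  by_cases h2' : q' = ⊤
  · rw [midQ_of_ne_bot h1' h2', h2']
    simp [le_dTop, le_top]
  · rw [midQ_mid h1 h2, midQ_mid h1' h2', inr_le_inr_iff]

lemma midP_le_midQ {p : BoxF d} {q : BoxF e}
    (h : midP d e p ≤ midQ d e q) : p = ⊥ ∨ q = ⊤ := by
  by_cases h1 : p = ⊥
  · exact Or.inl h1
  by_cases h2' : q = ⊤
  · exact Or.inr h2'
  exfalso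
  by_cases h2 : p = ⊤
  · rw [midP_of_ne_bot h1 h2] at h
    by_cases h1' : q = ⊥
    · rw [h1', midQ_bot, le_bot_iff] at h
      exact (by simp [dTop] : (dTop : Diamond (BoxF d) (BoxF e)) ≠ ⊥) h
    · rw [midQ_mid h1' h2'] at h
      exact not_dTop_le_inr _ h
  · rw [midP_mid h1 h2] at h
    by_cases h1' : q = ⊥
    · rw [h1', midQ_bot, le_bot_iff] at h
      exact coe_ne_bot _ h
    · rw [midQ_mid h1' h2'] at h
      exact not_inl_le_inr _ _ h

lemma midQ_le_midP {p : BoxF d} {q : BoxF e}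
    (h : midQ d e q ≤ midP d e p) : q = ⊥ ∨ p = ⊤ := by
  by_cases h1 : q = ⊥
  · exact Or.inl h1
  by_cases h2' : p = ⊤
  · exact Or.inr h2'
  exfalso
  by_cases h2 : q = ⊤
  · rw [midQ_of_ne_bot h1 h2] at h
    by_cases h1' : p = ⊥
    · rw [h1', midP_bot, le_bot_iff] at h
      exact (by simp [dTop] : (dTop : Diamond (BoxF d) (BoxF e)) ≠ ⊥) h
    · rw [midP_mid h1' h2'] at h
      exact not_dTop_le_inl _ h
  · rw [midQ_mid h1 h2] at h
    by_cases h1' : p = ⊥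
    · rw [h1', midP_bot, le_bot_iff] at h
      exact coe_ne_bot _ h
    · rw [midP_mid h1' h2'] at h
      exact not_inr_le_inl _ _ h

lemma same_side (hP : (⊥ : BoxF d) ≠ ⊤) (hQ : (⊥ : BoxF e) ≠ ⊤)
    {x y : Diamond (BoxF d) (BoxF e)} (h : x ≤ y) :
    (∃ p p', x = midP d e p ∧ y = midP d e p' ∧ p ≤ p') ∨
    (∃ q q', x = midQ d e q ∧ y = midQ d e q' ∧ q ≤ q') := by
  rcases exists_mid hP hQ x with ⟨p, rfl⟩ | ⟨q, rfl⟩ <;>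
    rcases exists_mid hP hQ y with ⟨p', rfl⟩ | ⟨q', rfl⟩
  · exact Or.inl ⟨p, p', rfl, rfl, (midP_le_midP hP).1 h⟩
  · rcases midP_le_midQ h with h1 | h2
    · subst h1
      exact Or.inr ⟨⊥, q', by rw [midP_bot, midQ_bot], rfl, bot_le⟩
    · subst h2
      exact Or.inl ⟨p, ⊤, rfl, by rw [midP_top hP, midQ_top hQ], le_top⟩
  · rcases midQ_le_midP h with h1 | h2
    · subst h1
      exact Or.inl ⟨⊥, p', by rw [midP_bot, midQ_bot], rfl, bot_le⟩
    · subst h2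
      exact Or.inr ⟨q, ⊤, rfl, by rw [midP_top hP, midQ_top hQ], le_top⟩
  · exact Or.inr ⟨q, q', rfl, rfl, (midQ_le_midQ hQ).1 h⟩

end Diamond2

end Stmt10Aux
namespace Stmt10Aux

open Finset

section Diamond3

variable {n m : ℕ} {d : Fin n → ℕ} {e : Fin m → ℕ}
variable (hP : (⊥ : BoxF d) ≠ ⊤) (hQ : (⊥ : BoxF e) ≠ ⊤) (hs : ∑ i, d i = ∑ i, e i)

include hP hQ hs

lemma rk_strict_mono {x y : Diamond (BoxF d) (BoxF e)} (h : x < y) :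
    rkD d e x < rkD d e y := by
  rcases same_side hP hQ h.le with ⟨p, p', rfl, rfl, hpp⟩ | ⟨q, q', rfl, rfl, hqq⟩
  · rw [rk_midP, rk_midP]
    exact boxFRank_strict_mono (lt_of_le_of_ne hpp fun hc => h.ne (by rw [hc]))
  · rw [rk_midQ hs, rk_midQ hs]
    exact boxFRank_strict_mono (lt_of_le_of_ne hqq fun hc => h.ne (by rw [hc]))

lemma dia_between {x y : Diamond (BoxF d) (BoxF e)} (h : x < y)
    (hr : rkD d e x + 2 ≤ rkD d e y) : ∃ z, x < z ∧ z < y := by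
  rcases same_side hP hQ h.le with ⟨p, p', rfl, rfl, hpp⟩ | ⟨q, q', rfl, rfl, hqq⟩
  · rw [rk_midP, rk_midP] at hr
    obtain ⟨z, hz1, hz2⟩ := box_between
      (lt_of_le_of_ne hpp fun hc => h.ne (by rw [hc])) hr
    refine ⟨midP d e z, ?_, ?_⟩
    · exact lt_of_le_of_ne ((midP_le_midP hP).2 hz1.le) fun hc => hz1.ne (midP_inj hc)
    · exact lt_of_le_of_ne ((midP_le_midP hP).2 hz2.le) fun hc => hz2.ne (midP_inj hc)
  · rw [rk_midQ hs, rk_midQ hs] at hr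
    obtain ⟨z, hz1, hz2⟩ := box_between
      (lt_of_le_of_ne hqq fun hc => h.ne (by rw [hc])) hr
    refine ⟨midQ d e z, ?_, ?_⟩
    · exact lt_of_le_of_ne ((midQ_le_midQ hQ).2 hz1.le) fun hc => hz1.ne (midQ_inj hc)
    · exact lt_of_le_of_ne ((midQ_le_midQ hQ).2 hz2.le) fun hc => hz2.ne (midQ_inj hc)

lemma covBy_iff {x y : Diamond (BoxF d) (BoxF e)} :
    x ⋖ y ↔ x ≤ y ∧ rkD d e y = rkD d e x + 1 := by
  constructor
  · intro h
    refine ⟨h.1.le, ?_⟩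
    have h1 := rk_strict_mono hP hQ hs h.1
    by_contra hc
    obtain ⟨z, hz1, hz2⟩ := dia_between hP hQ hs h.1 (by omega)
    exact h.2 hz1 hz2
  · rintro ⟨hle, hr⟩
    have hlt : x < y := lt_of_le_of_ne hle fun hc => by rw [hc] at hr; omega
    refine ⟨hlt, fun z hz1 hz2 => ?_⟩
    have h1 := rk_strict_mono hP hQ hs hz1
    have h2 := rk_strict_mono hP hQ hs hz2
    omega

lemma midP_covBy {p p' : BoxF d} (h1 : p ≤ p') (h2 : boxFRank p' = boxFRank p + 1) :
    midP d e p ⋖ midP d e p' := by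
  rw [covBy_iff hP hQ hs]
  exact ⟨(midP_le_midP hP).2 h1, by rw [rk_midP, rk_midP]; omega⟩

lemma midQ_covBy {q q' : BoxF e} (h1 : q ≤ q') (h2 : boxFRank q' = boxFRank q + 1) :
    midQ d e q ⋖ midQ d e q' := by
  rw [covBy_iff hP hQ hs]
  exact ⟨(midQ_le_midQ hQ).2 h1, by rw [rk_midQ hs, rk_midQ hs]; omega⟩

end Diamond3

section ShadowGeneric

variable {β : Type*} [PartialOrder β] [Fintype β]

lemma mem_shadow_iff {A : Finset β} {y : β} : y ∈ _root_.shadow A ↔ ∃ x ∈ A, x ⋖ y := by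
  classical
  simp [_root_.shadow]

lemma shadow_mono {A B : Finset β} (h : A ⊆ B) : _root_.shadow A ⊆ _root_.shadow B := by
  intro y hy
  rw [mem_shadow_iff] at hy ⊢
  obtain ⟨x, hx, hc⟩ := hy
  exact ⟨x, h hx, hc⟩

end ShadowGeneric

end Stmt10Aux
namespace Stmt10Aux

open Finset

section InitSeg

variable {β : Type*} [PartialOrder β] [Fintype β] (rank : β → ℕ) (lt : β → β → Prop)

lemma exists_lt_maximal (htrans : ∀ a b c, lt a b → lt b c → lt a c)
    (hirr : ∀ a, ¬ lt a a) {T : Finset β} (hT : T.Nonempty) :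
    ∃ x ∈ T, ∀ y ∈ T, ¬ lt x y := by
  classical
  induction T using Finset.induction_on with
  | empty => exact absurd hT (by simp)
  | @insert a T'' ha ih =>
    by_cases hT' : T''.Nonempty
    · obtain ⟨x, hx, hmax⟩ := ih hT'
      by_cases hlt : lt x a
      · refine ⟨a, mem_insert_self _ _, fun y hy hay => ?_⟩
        rcases mem_insert.1 hy with rfl | hy'
        · exact hirr _ hay
        · exact hmax y hy' (htrans _ _ _ hlt hay)
      · refine ⟨x, mem_insert_of_mem hx, fun y hy hxy => ?_⟩
        rcases mem_insert.1 hy with rfl | hy'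
        · exact hlt hxy
        · exact hmax y hy' hxy
    · rw [not_nonempty_iff_eq_empty] at hT'
      subst hT'
      refine ⟨a, mem_insert_self _ _, fun y hy hay => ?_⟩
      rcases mem_insert.1 hy with rfl | hy'
      · exact hirr _ hay
      · exact absurd hy' (by simp)

lemma initseg_subset_level {dd : ℕ} {S : Finset β} (hS : IsInitSeg rank lt dd S) :
    S ⊆ univ.filter (fun x => rank x = dd) := by
  classical
  intro x hx
  simp only [mem_filter, mem_univ, true_and]
  exact hS.1 x hx

lemma initseg_exists (htrans : ∀ a b c, lt a b → lt b c → lt a c) (hirr : ∀ a, ¬ lt a a)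
    (dd k : ℕ) (hk : k ≤ ((univ : Finset β).filter (fun x => rank x = dd)).card) :
    ∃ S : Finset β, IsInitSeg rank lt dd S ∧ S.card = k := by
  classical
  induction k with
  | zero => exact ⟨∅, ⟨by simp, by simp⟩, rfl⟩
  | succ k ih =>
    obtain ⟨S, hS, hcard⟩ := ih (by omega)
    have hsub := initseg_subset_level rank lt hS
    have hTne : (((univ : Finset β).filter (fun x => rank x = dd)) \ S).Nonempty := by
      rw [← card_pos, card_sdiff_of_subset hsub]
      omega
    obtain ⟨x, hxT, hmax⟩ := exists_lt_maximal lt htrans hirr hTne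
    have hxL := (mem_sdiff.1 hxT).1
    have hxS := (mem_sdiff.1 hxT).2
    refine ⟨insert x S, ⟨?_, ?_⟩, by rw [card_insert_of_notMem hxS, hcard]⟩
    · intro y hy
      rcases mem_insert.1 hy with rfl | hy'
      · exact (mem_filter.1 hxL).2
      · exact hS.1 y hy'
    · intro a ha b hb hab
      rcases mem_insert.1 ha with rfl | ha'
      · by_cases hbS : b ∈ S
        · exact mem_insert_of_mem hbS
        · exact absurd hab (hmax b (mem_sdiff.2 ⟨by simp [hb], hbS⟩))
      · exact mem_insert_of_mem (hS.2 a ha' b hb hab)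

lemma initseg_nested (htri : ∀ a b, lt a b ∨ a = b ∨ lt b a)
    {dd : ℕ} {S T : Finset β} (hS : IsInitSeg rank lt dd S) (hT : IsInitSeg rank lt dd T)
    (hc : S.card ≤ T.card) : S ⊆ T := by
  by_contra hns
  obtain ⟨x, hxS, hxT⟩ := not_subset.1 hns
  have hTS : T ⊆ S := by
    intro y hy
    rcases htri x y with h | h | h
    · exact hS.2 x hxS y (hT.1 y hy) h
    · exact absurd (h ▸ hy) hxT
    · exact absurd (hT.2 y hy x (hS.1 x hxS) h) hxT
  have hss : T ⊂ S := Finset.ssubset_def.2 ⟨hTS, fun hc' => hxT (hc' hxS)⟩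
  have := card_lt_card hss
  omega

end InitSeg

end Stmt10Aux
namespace Stmt10Aux

open Finset

section Vec

variable {k : ℕ} {f : Fin k → ℕ}

noncomputable def vecOf (f : Fin k → ℕ) (g : Fin k → ℕ) : BoxF f :=
  fun j => ⟨min (g j) (f j), by omega⟩

lemma vecOf_apply (g : Fin k → ℕ) (j : Fin k) (h : g j ≤ f j) :
    ((vecOf f g j : ℕ)) = g j := by
  simp [vecOf]; omega

noncomputable def sing (f : Fin k → ℕ) (i : Fin k) : BoxF f :=
  vecOf f (fun j => if j = i then 1 else 0)

noncomputable def indF (f : Fin k → ℕ) (p : Finset (Fin k)) : BoxF f :=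
  vecOf f (fun j => if j ∈ p then 1 else 0)

noncomputable def dbl (f : Fin k → ℕ) (i : Fin k) : BoxF f :=
  vecOf f (fun j => if j = i then 2 else 0)

variable (hf : ∀ i, 1 ≤ f i)

lemma sing_apply_self (i : Fin k) (h : 1 ≤ f i) : ((sing f i) i : ℕ) = 1 := by
  simp [sing, vecOf]; omega

lemma sing_apply_ne {i j : Fin k} (h : j ≠ i) : ((sing f i) j : ℕ) = 0 := by
  simp [sing, vecOf, h]

lemma indF_apply_mem {p : Finset (Fin k)} {j : Fin k} (hj : j ∈ p) (h : 1 ≤ f j) :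
    ((indF f p) j : ℕ) = 1 := by
  simp [indF, vecOf, hj]; omega

lemma indF_apply_not_mem {p : Finset (Fin k)} {j : Fin k} (hj : j ∉ p) :
    ((indF f p) j : ℕ) = 0 := by
  simp [indF, vecOf, hj]

lemma dbl_apply_self (i : Fin k) (h : 2 ≤ f i) : ((dbl f i) i : ℕ) = 2 := by
  simp [dbl, vecOf]; omega

lemma dbl_apply_ne {i j : Fin k} (h : j ≠ i) : ((dbl f i) j : ℕ) = 0 := by
  simp [dbl, vecOf, h]

include hf in
lemma rank_sing (i : Fin k) : boxFRank (sing f i) = 1 := by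
  rw [boxFRank_def]
  have : ∀ j, ((sing f i) j : ℕ) = if j = i then 1 else 0 := by
    intro j
    by_cases hj : j = i
    · subst hj; rw [sing_apply_self _ (hf j)]; simp
    · rw [sing_apply_ne hj]; simp [hj]
  rw [Finset.sum_congr rfl fun j _ => this j]
  simp

include hf in
lemma rank_indF (p : Finset (Fin k)) : boxFRank (indF f p) = p.card := by
  rw [boxFRank_def]
  have : ∀ j, ((indF f p) j : ℕ) = if j ∈ p then 1 else 0 := by
    intro j
    by_cases hj : j ∈ p
    · rw [indF_apply_mem hj (hf j)]; simp [hj]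
    · rw [indF_apply_not_mem hj]; simp [hj]
  rw [Finset.sum_congr rfl fun j _ => this j, Finset.sum_ite_mem]
  simp

lemma rank_dbl (i : Fin k) (h : 2 ≤ f i) : boxFRank (dbl f i) = 2 := by
  rw [boxFRank_def]
  have : ∀ j, ((dbl f i) j : ℕ) = if j = i then 2 else 0 := by
    intro j
    by_cases hj : j = i
    · subst hj; rw [dbl_apply_self _ h]; simp
    · rw [dbl_apply_ne hj]; simp [hj]
  rw [Finset.sum_congr rfl fun j _ => this j]
  simp

include hf in
lemma indF_inj {p p' : Finset (Fin k)} (h : indF f p = indF f p') : p = p' := by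
  ext j
  constructor
  · intro hj
    by_contra hj'
    have h1 := indF_apply_mem (f := f) hj (hf j)
    have h2 := indF_apply_not_mem (f := f) hj'
    rw [h] at h1; omega
  · intro hj
    by_contra hj'
    have h1 := indF_apply_mem (f := f) hj (hf j)
    have h2 := indF_apply_not_mem (f := f) hj'
    rw [h] at h2; omega

include hf in
lemma sing_inj {i i' : Fin k} (h : sing f i = sing f i') : i = i' := by
  by_contra hne
  have h1 := sing_apply_self (f := f) i (hf i)
  have h2 := sing_apply_ne (f := f) (fun hc : i = i' => hne hc)
  rw [h] at h1
  omega

lemma sing_le_indF {i : Fin k} {p : Finset (Fin k)} (hi : i ∈ p) :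
    sing f i ≤ indF f p := by
  rw [box_le_iff]
  intro j
  by_cases hj : j = i
  · subst hj
    have hs := Fin.is_le ((sing f j) j)
    by_cases h1 : 1 ≤ f j
    · rw [sing_apply_self _ h1, indF_apply_mem hi h1]
    · omega
  · rw [sing_apply_ne hj]; omega

lemma sing_le_dbl {i : Fin k} : sing f i ≤ dbl f i := by
  rw [box_le_iff]
  intro j
  by_cases hj : j = i
  · subst hj; simp [sing, dbl, vecOf]; try omega
  · rw [sing_apply_ne hj, dbl_apply_ne hj]

/-- support of a box vector -/
noncomputable def supp (x : BoxF f) : Finset (Fin k) :=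
  univ.filter (fun j => 0 < (x j : ℕ))

lemma sum_eq_two_cases (g : Fin k → ℕ) (hg : ∑ j, g j = 2) :
    (∃ i, g i = 2 ∧ ∀ l, l ≠ i → g l = 0) ∨
    (∃ i j, i ≠ j ∧ g i = 1 ∧ g j = 1 ∧ ∀ l, l ≠ i → l ≠ j → g l = 0) := by
  classical
  obtain ⟨i, hi⟩ : ∃ i, 0 < g i := by
    by_contra hc; push_neg at hc
    rw [Finset.sum_eq_zero fun j _ => by have := hc j; omega] at hg
    omega
  have hsplit : g i + ∑ j ∈ univ.erase i, g j = 2 := by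
    rw [← hg, ← Finset.add_sum_erase _ _ (mem_univ i)]
  have hgi : g i ≤ 2 := by omega
  by_cases h2 : g i = 2
  · left
    refine ⟨i, h2, fun l hl => ?_⟩
    have : ∑ j ∈ univ.erase i, g j = 0 := by omega
    rw [Finset.sum_eq_zero_iff] at this
    exact this l (by simp [hl])
  · right
    have hgi1 : g i = 1 := by omega
    have hrest : ∑ j ∈ univ.erase i, g j = 1 := by omega
    obtain ⟨j, hjmem, hj⟩ : ∃ j ∈ univ.erase i, 0 < g j := by
      by_contra hc; push_neg at hc
      rw [Finset.sum_eq_zero fun j hj => by have := hc j hj; omega] at hrest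
      omega
    have hji : j ≠ i := by simpa using (Finset.mem_erase.1 hjmem).1
    have hsplit2 : g j + ∑ l ∈ (univ.erase i).erase j, g l = 1 := by
      rw [← hrest, ← Finset.add_sum_erase _ _ hjmem]
    have hgj : g j = 1 := by omega
    refine ⟨i, j, fun hc => hji hc.symm, hgi1, hgj, fun l hli hlj => ?_⟩
    have : ∑ l ∈ (univ.erase i).erase j, g l = 0 := by omega
    rw [Finset.sum_eq_zero_iff] at this
    exact this l (by simp [hli, hlj])

lemma rank_two_classify {x : BoxF f} (hx : boxFRank x = 2) :
    (∃ i, 2 ≤ f i ∧ x = dbl f i) ∨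
    (∃ p : Finset (Fin k), p.card = 2 ∧ (∀ j ∈ p, 1 ≤ f j) ∧ x = indF f p) := by
  rw [boxFRank_def] at hx
  rcases sum_eq_two_cases _ hx with ⟨i, hi2, hrest⟩ | ⟨i, j, hij, hi1, hj1, hrest⟩
  · left
    have hfi : 2 ≤ f i := by have := Fin.is_le (x i); omega
    refine ⟨i, hfi, box_ext fun l => ?_⟩
    by_cases hl : l = i
    · subst hl; rw [dbl_apply_self _ hfi]; omega
    · rw [dbl_apply_ne hl]; exact hrest l hl
  · right
    have hfi : 1 ≤ f i := by have := Fin.is_le (x i); omega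
    have hfj : 1 ≤ f j := by have := Fin.is_le (x j); omega
    refine ⟨{i, j}, by rw [card_insert_of_notMem (by simp [hij]), card_singleton], ?_, box_ext fun l => ?_⟩
    · intro l hl
      rcases Finset.mem_insert.1 hl with rfl | hl
      · exact hfi
      · rw [Finset.mem_singleton.1 hl]; exact hfj
    · by_cases hli : l = i
      · subst hli; rw [indF_apply_mem (by simp) hfi]; omega
      by_cases hlj : l = j
      · subst hlj; rw [indF_apply_mem (by simp) hfj]; omega
      · rw [indF_apply_not_mem (by simp [hli, hlj])]
        exact hrest l hli hlj

lemma rank_one_classify {x : BoxF f} (hx : boxFRank x = 1) :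
    ∃ i, 1 ≤ f i ∧ x = sing f i := by
  rw [boxFRank_def] at hx
  obtain ⟨i, hi⟩ : ∃ i, 0 < (x i : ℕ) := by
    by_contra hc; push_neg at hc
    rw [Finset.sum_eq_zero fun j _ => by have := hc j; omega] at hx
    omega
  have hsplit : (x i : ℕ) + ∑ j ∈ univ.erase i, (x j : ℕ) = ∑ j, (x j : ℕ) :=
    Finset.add_sum_erase _ (fun j => ((x j : ℕ))) (mem_univ i)
  rw [hx] at hsplit
  have hxi : (x i : ℕ) = 1 := by omega
  have hfi : 1 ≤ f i := by have := Fin.is_le (x i); omega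
  refine ⟨i, hfi, box_ext fun l => ?_⟩
  by_cases hl : l = i
  · subst hl; rw [sing_apply_self _ hfi]; omega
  · rw [sing_apply_ne hl]
    have : ∑ j ∈ univ.erase i, (x j : ℕ) = 0 := by omega
    rw [Finset.sum_eq_zero_iff] at this
    exact this l (by simp [hl])

/-- flip (complement) of the box -/
noncomputable def flipB (f : Fin k → ℕ) (x : BoxF f) : BoxF f :=
  fun j => ⟨f j - (x j : ℕ), by omega⟩

lemma flipB_apply (x : BoxF f) (j : Fin k) : ((flipB f x) j : ℕ) = f j - (x j : ℕ) := rfl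

lemma flipB_flipB (x : BoxF f) : flipB f (flipB f x) = x :=
  box_ext fun j => by rw [flipB_apply, flipB_apply]; have := Fin.is_le (x j); omega

lemma flipB_antitone {x y : BoxF f} (h : x ≤ y) : flipB f y ≤ flipB f x := by
  rw [box_le_iff]
  intro j
  rw [flipB_apply, flipB_apply]
  have := (box_le_iff x y).1 h j
  omega

lemma rank_flipB (x : BoxF f) : boxFRank (flipB f x) + boxFRank x = ∑ i, f i := by
  rw [boxFRank_def, boxFRank_def, ← Finset.sum_add_distrib]
  refine Finset.sum_congr rfl fun j _ => ?_
  rw [flipB_apply]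
  have := Fin.is_le (x j)
  omega

lemma flipB_inj {x y : BoxF f} (h : flipB f x = flipB f y) : x = y := by
  rw [← flipB_flipB (x := x), h, flipB_flipB]

end Vec

end Stmt10Aux
namespace Stmt10Aux

open Finset

section Levels

variable {k : ℕ} {f : Fin k → ℕ}

lemma supp_dbl {i : Fin k} (h : 2 ≤ f i) : supp (dbl f i) = {i} := by
  ext j
  simp only [supp, mem_filter, mem_univ, true_and, mem_singleton]
  by_cases hj : j = i
  · subst hj; rw [dbl_apply_self _ h]; simp
  · rw [dbl_apply_ne hj]; simp [hj]

lemma supp_indF {p : Finset (Fin k)} (hp : ∀ j ∈ p, 1 ≤ f j) : supp (indF f p) = p := by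
  ext j
  simp only [supp, mem_filter, mem_univ, true_and]
  by_cases hj : j ∈ p
  · rw [indF_apply_mem hj (hp j hj)]; simp [hj]
  · rw [indF_apply_not_mem hj]; simp [hj]

lemma level_one_count (hf : ∀ i, 1 ≤ f i) :
    ((univ : Finset (BoxF f)).filter (fun x => boxFRank x = 1)).card = k := by
  classical
  have himg : (univ : Finset (BoxF f)).filter (fun x => boxFRank x = 1) =
      univ.image (sing f) := by
    ext x
    constructor
    · intro hx
      obtain ⟨i, _, rfl⟩ := rank_one_classify (mem_filter.1 hx).2
      exact mem_image.2 ⟨i, mem_univ i, rfl⟩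
    · intro hx
      obtain ⟨i, _, rfl⟩ := mem_image.1 hx
      exact mem_filter.2 ⟨mem_univ _, rank_sing hf i⟩
  rw [himg, card_image_of_injOn fun i _ i' _ h => sing_inj hf h, card_univ, Fintype.card_fin]

lemma level_two_count (hf : ∀ i, 1 ≤ f i) :
    ((univ : Finset (BoxF f)).filter (fun x => boxFRank x = 2)).card ≤ k.choose 2 + k := by
  have hmaps : ∀ x ∈ (univ : Finset (BoxF f)).filter (fun x => boxFRank x = 2),
      supp x ∈ (univ : Finset (Fin k)).powersetCard 2 ∪ (univ : Finset (Fin k)).powersetCard 1 := by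
    intro x hx
    rcases rank_two_classify (mem_filter.1 hx).2 with ⟨i, hfi, rfl⟩ | ⟨p, hp2, hp1, rfl⟩
    · rw [supp_dbl hfi]
      exact mem_union_right _ (by simp [mem_powersetCard])
    · rw [supp_indF hp1]
      exact mem_union_left _ (by simp [mem_powersetCard, hp2])
  have hinj : ∀ x ∈ (univ : Finset (BoxF f)).filter (fun x => boxFRank x = 2),
      ∀ y ∈ (univ : Finset (BoxF f)).filter (fun x => boxFRank x = 2),
      supp x = supp y → x = y := by
    intro x hx y hy hxy
    rcases rank_two_classify (mem_filter.1 hx).2 with ⟨i, hfi, rfl⟩ | ⟨p, hp2, hp1, rfl⟩ <;>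
      rcases rank_two_classify (mem_filter.1 hy).2 with ⟨i', hfi', rfl⟩ | ⟨p', hp2', hp1', rfl⟩
    · rw [supp_dbl hfi, supp_dbl hfi'] at hxy
      rw [Finset.singleton_inj.1 hxy]
    · exfalso
      rw [supp_dbl hfi, supp_indF hp1'] at hxy
      rw [← hxy] at hp2'
      simp at hp2'
    · exfalso
      rw [supp_dbl hfi', supp_indF hp1] at hxy
      rw [hxy] at hp2
      simp at hp2
    · have hpp : p = p' := by rw [supp_indF hp1, supp_indF hp1'] at hxy; exact hxy
      rw [hpp]
  calc ((univ : Finset (BoxF f)).filter (fun x => boxFRank x = 2)).card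
      ≤ ((univ : Finset (Fin k)).powersetCard 2 ∪ (univ : Finset (Fin k)).powersetCard 1).card :=
        Finset.card_le_card_of_injOn supp hmaps hinj
    _ ≤ ((univ : Finset (Fin k)).powersetCard 2).card + ((univ : Finset (Fin k)).powersetCard 1).card :=
        card_union_le _ _
    _ ≤ k.choose 2 + k := by
        rw [card_powersetCard, card_powersetCard, card_univ, Fintype.card_fin]
        simp

lemma level_flip_count {t : ℕ} (ht : t ≤ ∑ i, f i) :
    ((univ : Finset (BoxF f)).filter (fun x => boxFRank x = t)).card =
    ((univ : Finset (BoxF f)).filter (fun x => boxFRank x = ∑ i, f i - t)).card := by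
  refine Finset.card_bij' (fun x _ => flipB f x) (fun x _ => flipB f x) ?_ ?_ ?_ ?_
  · intro x hx
    have h1 := rank_flipB x
    have h2 := (mem_filter.1 hx).2
    simp only [mem_filter, mem_univ, true_and]
    omega
  · intro x hx
    have h1 := rank_flipB x
    have h2 := (mem_filter.1 hx).2
    have h3 := boxFRank_le x
    simp only [mem_filter, mem_univ, true_and]
    omega
  · intro x _; exact flipB_flipB x
  · intro x _; exact flipB_flipB x

end Levels

section QLlevels

variable {n m : ℕ} {d : Fin n → ℕ} {e : Fin m → ℕ}

open Classical in
noncomputable def QL (d : Fin n → ℕ) (e : Fin m → ℕ) (t : ℕ) : Finset (Diamond (BoxF d) (BoxF e)) :=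
  ((univ : Finset (BoxF e)).filter (fun q => boxFRank q = t)).image (midQ d e)

lemma mem_QL {t : ℕ} {x : Diamond (BoxF d) (BoxF e)} :
    x ∈ QL d e t ↔ ∃ q, boxFRank q = t ∧ x = midQ d e q := by
  simp only [QL, mem_image, mem_filter, mem_univ, true_and]
  constructor
  · rintro ⟨q, h1, rfl⟩; exact ⟨q, h1, rfl⟩
  · rintro ⟨q, h1, rfl⟩; exact ⟨q, h1, rfl⟩

lemma card_QL (t : ℕ) :
    (QL d e t).card = ((univ : Finset (BoxF e)).filter (fun q => boxFRank q = t)).card := by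
  classical
  exact card_image_of_injOn fun q _ q' _ h => midQ_inj h

lemma rank_of_mem_QL (hs : ∑ i, d i = ∑ i, e i) {t : ℕ} {x : Diamond (BoxF d) (BoxF e)}
    (hx : x ∈ QL d e t) : rkD d e x = t := by
  obtain ⟨q, h1, rfl⟩ := mem_QL.1 hx
  rw [rk_midQ hs, h1]

lemma midQ_mem_QL {t : ℕ} {q : BoxF e} (h : boxFRank q = t) : midQ d e q ∈ QL d e t :=
  mem_QL.2 ⟨q, h, rfl⟩

lemma not_mem_QL (hP : (⊥ : BoxF d) ≠ ⊤) (hQ : (⊥ : BoxF e) ≠ ⊤)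
    (hs : ∑ i, d i = ∑ i, e i) {t : ℕ} {x : Diamond (BoxF d) (BoxF e)}
    (hx : rkD d e x = t) (hxQ : x ∉ QL d e t) :
    ∃ p, boxFRank p = t ∧ x = midP d e p := by
  rcases exists_mid hP hQ x with ⟨p, rfl⟩ | ⟨q, rfl⟩
  · rw [rk_midP] at hx
    exact ⟨p, hx, rfl⟩
  · rw [rk_midQ hs] at hx
    exact absurd (midQ_mem_QL hx) hxQ

lemma midQ_eq_midP_absurd (hs : ∑ i, d i = ∑ i, e i) {q : BoxF e} {p : BoxF d}
    (h : midQ d e q = midP d e p) (h1 : 0 < boxFRank q)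
    (h2 : boxFRank q < ∑ i, e i) : False := by
  by_cases hq1 : q = ⊥
  · subst hq1; rw [boxFRank_bot] at h1; omega
  by_cases hq2 : q = ⊤
  · subst hq2; rw [boxFRank_top] at h2; omega
  rw [midQ_mid hq1 hq2] at h
  by_cases hp1 : p = ⊥
  · subst hp1; rw [midP_bot] at h
    exact coe_ne_bot _ h
  by_cases hp2 : p = ⊤
  · rw [midP_of_ne_bot hp1 hp2] at h
    exact inr_ne_dTop _ h
  · rw [midP_mid hp1 hp2] at h
    exact inl_ne_inr _ _ h.symm

lemma shadow_QL (hP : (⊥ : BoxF d) ≠ ⊤) (hQ : (⊥ : BoxF e) ≠ ⊤)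
    (hs : ∑ i, d i = ∑ i, e i) {t : ℕ} (h1 : 1 ≤ t) (h2 : t + 2 ≤ ∑ i, d i) :
    _root_.shadow (QL d e t) = QL d e (t + 1) := by
  ext y
  rw [mem_shadow_iff, mem_QL]
  constructor
  · rintro ⟨x, hx, hcov⟩
    obtain ⟨q, hq, rfl⟩ := mem_QL.1 hx
    obtain ⟨hle, hr⟩ := (covBy_iff hP hQ hs).1 hcov
    rcases same_side hP hQ hle with ⟨p, p', hxp, hyp, hpp⟩ | ⟨q'', q', hxq, hyq, hqq⟩
    · exfalso
      refine midQ_eq_midP_absurd hs hxp (by omega) (by omega)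
    · refine ⟨q', ?_, hyq⟩
      rw [hyq, rk_midQ hs] at hr
      rw [hr, rk_midQ hs]
      have := midQ_inj hxq
      subst this
      rw [hq]
  · rintro ⟨q', hq', rfl⟩
    obtain ⟨qd, hqd1, hqd2⟩ := box_down (x := q') (by omega)
    refine ⟨midQ d e qd, midQ_mem_QL (by omega), midQ_covBy hP hQ hs hqd1 (by omega)⟩

end QLlevels

end Stmt10Aux
namespace Stmt10Aux

open Finset

lemma choose_two_succ (x : ℕ) : (x+1).choose 2 = x.choose 2 + x := by
  rw [Nat.choose_succ_succ, Nat.choose_one_right, Nat.add_comm]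

lemma two_mul_choose_two (x : ℕ) : 2 * x.choose 2 = x * (x - 1) := by
  induction x with
  | zero => rfl
  | succ y ih =>
    rw [choose_two_succ, Nat.mul_add, ih]
    cases y with
    | zero => rfl
    | succ z =>
      simp only [Nat.add_sub_cancel]
      ring

lemma key_choose {a mm nn : ℕ} (h1 : 1 ≤ a) (h2 : a ≤ mm) (h3 : mm + 2 ≤ nn) :
    (nn - a).choose 2 + a.choose 2 + mm + 1 ≤ nn.choose 2 := by
  have e1 := two_mul_choose_two (nn - a)
  have e2 := two_mul_choose_two a
  have e3 := two_mul_choose_two nn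
  obtain ⟨a', rfl⟩ : ∃ a', a = a' + 1 := ⟨a - 1, by omega⟩
  obtain ⟨c', hc⟩ : ∃ c', nn - (a' + 1) = c' + 2 := ⟨nn - a' - 3, by omega⟩
  obtain ⟨mm', rfl⟩ : ∃ m', mm = m' + 1 := ⟨mm - 1, by omega⟩
  have hnn : nn = a' + c' + 3 := by omega
  subst hnn
  rw [hc] at e1 ⊢
  have e1' : 2 * (c' + 2).choose 2 = (c' + 2) * (c' + 1) := by
    rw [e1]; congr 1; try omega
  have e2' : 2 * (a' + 1).choose 2 = (a' + 1) * a' := by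
    rw [e2]; congr 1
  have e3' : 2 * (a' + c' + 3).choose 2 = (a' + c' + 3) * (a' + c' + 2) := by
    rw [e3]; congr 1; try omega
  nlinarith [Nat.zero_le (a' * c'), Nat.zero_le (a' * a'), Nat.zero_le (c' * c')]

section Main1

variable {n m : ℕ} {d : Fin n → ℕ} {e : Fin m → ℕ}
variable (hd : ∀ i, 1 ≤ d i) (he : ∀ i, 1 ≤ e i)
variable (hmn : m + 2 ≤ n) (hm1 : 1 ≤ m) (hs : ∑ i, d i = ∑ i, e i)

lemma sum_d_ge (hd : ∀ i, 1 ≤ d i) : n ≤ ∑ i, d i := by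
  calc n = ∑ _i : Fin n, 1 := by simp
    _ ≤ ∑ i, d i := Finset.sum_le_sum fun i _ => hd i

lemma hP' (hd : ∀ i, 1 ≤ d i) (hmn : m + 2 ≤ n) : (⊥ : BoxF d) ≠ ⊤ := by
  refine box_bot_ne_top ?_
  have := sum_d_ge hd
  omega

lemma hQ' (hd : ∀ i, 1 ≤ d i) (hmn : m + 2 ≤ n) (hs : ∑ i, d i = ∑ i, e i) :
    (⊥ : BoxF e) ≠ ⊤ := by
  refine box_bot_ne_top ?_
  have := sum_d_ge hd
  omega

lemma sum_e_pos (hd : ∀ i, 1 ≤ d i) (hmn : m + 2 ≤ n) (hm1 : 1 ≤ m)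
    (hs : ∑ i, d i = ∑ i, e i) : 3 ≤ ∑ i, e i := by
  have := sum_d_ge hd
  omega

include hd he hmn hm1 hs in
lemma QL1_initseg (lt : Diamond (BoxF d) (BoxF e) → Diamond (BoxF d) (BoxF e) → Prop)
    (htri : ∀ a b, lt a b ∨ a = b ∨ lt b a)
    (htrans : ∀ a b c, lt a b → lt b c → lt a c) (hirr : ∀ a, ¬ lt a a)
    (hmin : ∀ t (A S : Finset (Diamond (BoxF d) (BoxF e))),
      (∀ x ∈ A, rkD d e x = t) → IsInitSeg (rkD d e) lt t S →
      S.card = A.card → (_root_.shadow S).card ≤ (_root_.shadow A).card) :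
    IsInitSeg (rkD d e) lt 1 (QL d e 1) := by
  classical
  have hP : (⊥ : BoxF d) ≠ ⊤ := hP' hd hmn
  have hQ : (⊥ : BoxF e) ≠ ⊤ := hQ' hd hmn hs
  have hSn := sum_d_ge (d := d) hd
  have hse3 := sum_e_pos hd hmn hm1 hs
  have hcardQL1 : (QL d e 1).card = m := by
    rw [card_QL, level_one_count he]
  -- get an initial segment of size m at level 1
  have hQLsub : QL d e 1 ⊆ univ.filter (fun x => rkD d e x = 1) := by
    intro x hx
    simp only [mem_filter, mem_univ, true_and]
    exact rank_of_mem_QL hs hx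
  obtain ⟨I, hI, hIcard⟩ := initseg_exists (rkD d e) lt htrans hirr 1 m
    (by have h := card_le_card hQLsub; omega)
  -- it suffices to show I = QL d e 1
  suffices hIQ : I = QL d e 1 by rwa [hIQ] at hI
  by_contra hne
  have hxex : ∃ x ∈ I, x ∉ QL d e 1 := by
    by_contra hc
    push_neg at hc
    exact hne (eq_of_subset_of_card_le hc (by omega))
  obtain ⟨x₀, hx₀I, hx₀Q⟩ := hxex
  obtain ⟨p₀, hp₀r, hx₀p⟩ := not_mem_QL hP hQ hs (hI.1 x₀ hx₀I) hx₀Q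
  -- index sets
  set IA : Finset (Fin n) := univ.filter (fun i => midP d e (sing d i) ∈ I) with hIA
  set IB : Finset (Fin m) := univ.filter (fun i => midQ d e (sing e i) ∈ I) with hIB
  set a := IA.card with haa
  set b := IB.card with hbb
  -- partition of I
  have hpart : I = IA.image (fun i => midP d e (sing d i)) ∪
      IB.image (fun i => midQ d e (sing e i)) := by
    ext x
    constructor
    · intro hx
      have hrk := hI.1 x hx
      rcases exists_mid hP hQ x with ⟨p, rfl⟩ | ⟨q, rfl⟩
      · rw [rk_midP] at hrk
        obtain ⟨i, _, rfl⟩ := rank_one_classify hrk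
        exact mem_union_left _ (mem_image.2 ⟨i, by simp [hIA, hx], rfl⟩)
      · rw [rk_midQ hs] at hrk
        obtain ⟨i, _, rfl⟩ := rank_one_classify hrk
        exact mem_union_right _ (mem_image.2 ⟨i, by simp [hIB, hx], rfl⟩)
    · intro hx
      rcases mem_union.1 hx with hx' | hx'
      · obtain ⟨i, hi, rfl⟩ := mem_image.1 hx'
        exact (mem_filter.1 hi).2
      · obtain ⟨i, hi, rfl⟩ := mem_image.1 hx'
        exact (mem_filter.1 hi).2
  have hdisjab : Disjoint (IA.image (fun i => midP d e (sing d i)))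
      (IB.image (fun i => midQ d e (sing e i))) := by
    rw [Finset.disjoint_left]
    rintro y hy1 hy2
    obtain ⟨i, _, rfl⟩ := mem_image.1 hy1
    obtain ⟨j, _, hj⟩ := mem_image.1 hy2
    exact midQ_eq_midP_absurd hs hj (by rw [rank_sing he]; omega)
      (by rw [rank_sing he]; omega)
  have hab : a + b = m := by
    have h1 : (IA.image (fun i => midP d e (sing d i))).card = a :=
      card_image_of_injOn fun i _ i' _ h => sing_inj hd (midP_inj h)
    have h2 : (IB.image (fun i => midQ d e (sing e i))).card = b :=
      card_image_of_injOn fun i _ i' _ h => sing_inj he (midQ_inj h)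
    rw [← hIcard, hpart, card_union_of_disjoint hdisjab, h1, h2]
  have ha1 : 1 ≤ a := by
    obtain ⟨i, _, rfl⟩ := rank_one_classify hp₀r
    have : i ∈ IA := by
      simp only [hIA, mem_filter, mem_univ, true_and]
      rw [← hx₀p]
      exact hx₀I
    rw [haa]
    exact card_pos.2 ⟨i, this⟩
  -- shadow families
  set SPf : Finset (Finset (Fin n)) :=
    ((univ : Finset (Fin n)).powersetCard 2).filter (fun p => (p ∩ IA).Nonempty) with hSPf
  set SQf : Finset (Finset (Fin m)) :=
    ((univ : Finset (Fin m)).powersetCard 2).filter (fun p => (p ∩ IB).Nonempty) with hSQf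
  set SP := SPf.image (fun p => midP d e (indF d p)) with hSP
  set SQ := SQf.image (fun p => midQ d e (indF e p)) with hSQ
  have hSPsub : SP ⊆ _root_.shadow I := by
    intro y hy
    obtain ⟨p, hp, rfl⟩ := mem_image.1 hy
    obtain ⟨hp2, hpa⟩ := mem_filter.1 hp
    have hp2' : p.card = 2 := (mem_powersetCard.1 hp2).2
    obtain ⟨i, hi⟩ := hpa
    have hiIA : i ∈ IA := (mem_inter.1 hi).2
    have hip : i ∈ p := (mem_inter.1 hi).1
    rw [mem_shadow_iff]
    refine ⟨midP d e (sing d i), (mem_filter.1 hiIA).2, ?_⟩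
    refine midP_covBy hP hQ hs (sing_le_indF hip) ?_
    rw [rank_indF hd, rank_sing hd, hp2']
  have hSQsub : SQ ⊆ _root_.shadow I := by
    intro y hy
    obtain ⟨p, hp, rfl⟩ := mem_image.1 hy
    obtain ⟨hp2, hpa⟩ := mem_filter.1 hp
    have hp2' : p.card = 2 := (mem_powersetCard.1 hp2).2
    obtain ⟨i, hi⟩ := hpa
    have hiIB : i ∈ IB := (mem_inter.1 hi).2
    have hip : i ∈ p := (mem_inter.1 hi).1
    rw [mem_shadow_iff]
    refine ⟨midQ d e (sing e i), (mem_filter.1 hiIB).2, ?_⟩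
    refine midQ_covBy hP hQ hs (sing_le_indF hip) ?_
    rw [rank_indF he, rank_sing he, hp2']
  have hSPcard : SP.card = SPf.card :=
    card_image_of_injOn fun p _ p' _ h => indF_inj hd (midP_inj h)
  have hSQcard : SQ.card = SQf.card :=
    card_image_of_injOn fun p _ p' _ h => indF_inj he (midQ_inj h)
  have hdisjPQ : Disjoint SP SQ := by
    rw [Finset.disjoint_left]
    rintro y hy1 hy2
    obtain ⟨p, hp, rfl⟩ := mem_image.1 hy1
    obtain ⟨p', hp', hj⟩ := mem_image.1 hy2
    have hc2 : p'.card = 2 := (mem_powersetCard.1 (mem_filter.1 hp').1).2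
    refine midQ_eq_midP_absurd hs hj ?_ ?_ <;> rw [rank_indF he, hc2] <;> omega
  -- counting the pair families
  have hSPfc : SPf.card + (n - a).choose 2 = n.choose 2 := by
    have hsplit := Finset.card_filter_add_card_filter_not
      (s := (univ : Finset (Fin n)).powersetCard 2) (p := fun p => (p ∩ IA).Nonempty)
    have hneg : ((univ : Finset (Fin n)).powersetCard 2).filter
        (fun p => ¬ (p ∩ IA).Nonempty) = IAᶜ.powersetCard 2 := by
      ext p
      rw [mem_filter, mem_powersetCard, mem_powersetCard, not_nonempty_iff_eq_empty]
      constructor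
      · rintro ⟨⟨_, hc⟩, hemp⟩
        refine ⟨fun x hx => mem_compl.2 fun hxIA => ?_, hc⟩
        have : x ∈ p ∩ IA := mem_inter.2 ⟨hx, hxIA⟩
        rw [hemp] at this
        exact absurd this (notMem_empty x)
      · rintro ⟨hsub, hc⟩
        refine ⟨⟨subset_univ p, hc⟩, ?_⟩
        rw [Finset.eq_empty_iff_forall_notMem]
        intro x hx
        exact (mem_compl.1 (hsub (mem_inter.1 hx).1)) (mem_inter.1 hx).2
    rw [hneg, card_powersetCard, card_powersetCard, card_univ, Fintype.card_fin,
      card_compl, Fintype.card_fin] at hsplit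
    exact hsplit
  have hSQfc : SQf.card + a.choose 2 = m.choose 2 := by
    have hsplit := Finset.card_filter_add_card_filter_not
      (s := (univ : Finset (Fin m)).powersetCard 2) (p := fun p => (p ∩ IB).Nonempty)
    have hneg : ((univ : Finset (Fin m)).powersetCard 2).filter
        (fun p => ¬ (p ∩ IB).Nonempty) = IBᶜ.powersetCard 2 := by
      ext p
      rw [mem_filter, mem_powersetCard, mem_powersetCard, not_nonempty_iff_eq_empty]
      constructor
      · rintro ⟨⟨_, hc⟩, hemp⟩
        refine ⟨fun x hx => mem_compl.2 fun hxIB => ?_, hc⟩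
        have : x ∈ p ∩ IB := mem_inter.2 ⟨hx, hxIB⟩
        rw [hemp] at this
        exact absurd this (notMem_empty x)
      · rintro ⟨hsub, hc⟩
        refine ⟨⟨subset_univ p, hc⟩, ?_⟩
        rw [Finset.eq_empty_iff_forall_notMem]
        intro x hx
        exact (mem_compl.1 (hsub (mem_inter.1 hx).1)) (mem_inter.1 hx).2
    rw [hneg, card_powersetCard, card_powersetCard, card_univ, Fintype.card_fin,
      card_compl, Fintype.card_fin] at hsplit
    have hba : m - b = a := by omega
    rw [hba] at hsplit
    exact hsplit
  -- lower bound on shadow I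
  have hlow : m.choose 2 + m + 1 ≤ (_root_.shadow I).card := by
    have hsub : SP ∪ SQ ⊆ _root_.shadow I := union_subset hSPsub hSQsub
    have hcard : (SP ∪ SQ).card = SP.card + SQ.card := card_union_of_disjoint hdisjPQ
    have h1 := card_le_card hsub
    have hkey := key_choose ha1 (by omega : a ≤ m) hmn
    omega
  -- upper bound via minimality
  have hup : (_root_.shadow I).card ≤ m.choose 2 + m := by
    have h1 := hmin 1 (QL d e 1) I (fun x hx => rank_of_mem_QL hs hx) hI (by omega)
    have h2 : _root_.shadow (QL d e 1) = QL d e 2 := shadow_QL hP hQ hs le_rfl (by omega)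
    have h3 : (QL d e 2).card ≤ m.choose 2 + m := by
      rw [card_QL]
      exact level_two_count he
    rw [h2] at h1
    omega
  omega

end Main1

end Stmt10Aux
namespace Stmt10Aux

open Finset

section Main2

variable {n m : ℕ} {d : Fin n → ℕ} {e : Fin m → ℕ}

lemma QL_initseg_all (hP : (⊥ : BoxF d) ≠ ⊤) (hQ : (⊥ : BoxF e) ≠ ⊤)
    (hs : ∑ i, d i = ∑ i, e i) (lt : Diamond (BoxF d) (BoxF e) → Diamond (BoxF d) (BoxF e) → Prop)
    (hsh : ∀ t S, IsInitSeg (rkD d e) lt t S → IsInitSeg (rkD d e) lt (t+1) (_root_.shadow S))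
    (hbase : IsInitSeg (rkD d e) lt 1 (QL d e 1)) :
    ∀ t, 1 ≤ t → t + 2 ≤ ∑ i, d i → IsInitSeg (rkD d e) lt t (QL d e t) := by
  intro t
  induction t with
  | zero => intro h; omega
  | succ k ih =>
    intro h1 h2
    by_cases hk : k = 0
    · subst hk; exact hbase
    · have hkin := ih (by omega) (by omega)
      have heq : QL d e (k + 1) = _root_.shadow (QL d e k) :=
        (shadow_QL hP hQ hs (by omega) (by omega)).symm
      rw [heq]
      exact hsh k _ hkin

end Main2

end Stmt10Aux

/-- The diamond product of an n-dimensional box poset and an m-dimensional box poset of the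
same rank with `m ≤ n - 2` is not Macaulay. -/
theorem stmt10 {n m : ℕ} (d : Fin n → ℕ) (e : Fin m → ℕ) (hd : ∀ i, 1 ≤ d i)
    (he : ∀ i, 1 ≤ e i) (hmn : m + 2 ≤ n) (hs : ∑ i, d i = ∑ i, e i) :
    ¬ IsMacaulay (diamondRank boxFRank boxFRank (∑ i, d i) :
      Diamond (BoxF d) (BoxF e) → ℕ) := by
  classical
  open Stmt10Aux in
  rintro ⟨lt, ⟨htri⟩, ⟨htrans⟩, ⟨hirr⟩, hmin, hsh⟩
  have htri' : ∀ a b, lt a b ∨ a = b ∨ lt b a := fun a b => by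
    by_cases h1 : lt a b
    · exact Or.inl h1
    by_cases h2 : lt b a
    · exact Or.inr (Or.inr h2)
    · exact Or.inr (Or.inl (htri a b h1 h2))
  have hm1 : 1 ≤ m := by
    by_contra hc
    have hm0 : m = 0 := by omega
    have h1 := Stmt10Aux.sum_d_ge (d := d) hd
    have h2 : ∑ i, e i = 0 := by
      subst hm0
      simp
    omega
  have hP : (⊥ : BoxF d) ≠ ⊤ := Stmt10Aux.hP' hd hmn
  have hQ : (⊥ : BoxF e) ≠ ⊤ := Stmt10Aux.hQ' hd hmn hs
  have hSn := Stmt10Aux.sum_d_ge (d := d) hd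
  have hse3 := Stmt10Aux.sum_e_pos hd hmn hm1 hs
  -- convert the Macaulay hypotheses to rkD form
  have hmin' : ∀ t (A S' : Finset (Diamond (BoxF d) (BoxF e))),
      (∀ x ∈ A, Stmt10Aux.rkD d e x = t) → IsInitSeg (Stmt10Aux.rkD d e) lt t S' →
      S'.card = A.card → (shadow S').card ≤ (shadow A).card := hmin
  have hsh' : ∀ t (S' : Finset (Diamond (BoxF d) (BoxF e))),
      IsInitSeg (Stmt10Aux.rkD d e) lt t S' →
      IsInitSeg (Stmt10Aux.rkD d e) lt (t+1) (shadow S') := hsh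
  set S := ∑ i, d i with hSdef
  clear_value S
  have hsPQ : ∑ i, d i = ∑ i, e i := by rw [← hSdef]; exact hs
  have hS3 : 3 ≤ S := by omega
  have hS21 : S - 2 + 1 = S - 1 := by omega
  -- base: QL 1 is an initial segment
  have hbase : IsInitSeg (Stmt10Aux.rkD d e) lt 1 (Stmt10Aux.QL d e 1) :=
    Stmt10Aux.QL1_initseg hd he hmn hm1 hsPQ lt htri' htrans hirr hmin'
  -- QL (S - 2) is an initial segment
  have hQLinit : IsInitSeg (Stmt10Aux.rkD d e) lt (S - 2) (Stmt10Aux.QL d e (S - 2)) :=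
    Stmt10Aux.QL_initseg_all hP hQ hsPQ lt (fun t S' h => hsh' t S' h) hbase (S - 2)
      (by omega) (by omega)
  -- cardinality of QL (S-2)
  set q := (Stmt10Aux.QL d e (S - 2)).card with hqdef
  clear_value q
  have hqb : q ≤ m.choose 2 + m := by
    have hSe2 : S - 2 = ∑ i, e i - 2 := by omega
    have hc2 : q = ((univ : Finset (BoxF e)).filter
        (fun x => boxFRank x = ∑ i, e i - 2)).card := by
      rw [hqdef, Stmt10Aux.card_QL, hSe2]
    have hflip := Stmt10Aux.level_flip_count (f := e) (t := ∑ i, e i - 2) (by omega)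
    have h22 : ∑ i, e i - (∑ i, e i - 2) = 2 := by omega
    rw [h22] at hflip
    have hl2 := Stmt10Aux.level_two_count (f := e) he
    omega
  -- loops
  set lam := ((univ : Finset (Fin n)).filter (fun i => 2 ≤ d i)).card with hlamdef
  clear_value lam
  set lmin := min 2 lam with hlmin
  have hlmin2 : lmin ≤ 2 := min_le_left _ _
  have hlminlam : lmin ≤ lam := min_le_right _ _
  clear_value lmin
  obtain ⟨L2, hL2sub, hL2card⟩ := Finset.exists_subset_card_eq
    (show lmin ≤ ((univ : Finset (Fin n)).filter (fun i => 2 ≤ d i)).card by omega)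
  obtain ⟨C, hL2C, hCuniv, hCcard⟩ := Finset.exists_subsuperset_card_eq
    (Finset.subset_univ L2) (show L2.card ≤ m + 2 by omega)
    (show m + 2 ≤ (univ : Finset (Fin n)).card by rw [card_univ, Fintype.card_fin]; omega)
  set CL := C.filter (fun i => 2 ≤ d i) with hCLdef
  have hCLge : lmin ≤ CL.card := by
    refine le_trans (le_of_eq hL2card.symm) (card_le_card ?_)
    intro i hi
    exact mem_filter.2 ⟨hL2C hi, (mem_filter.1 (hL2sub hi)).2⟩
  have hCLle2 : CL.card ≤ lam := by
    rw [hlamdef]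
    refine card_le_card ?_
    intro i hi
    exact mem_filter.2 ⟨mem_univ _, (mem_filter.1 hi).2⟩
  -- the competitor family A_full
  set Afull : Finset (Diamond (BoxF d) (BoxF e)) :=
    (C.powersetCard 2).image (fun p => Stmt10Aux.midP d e (Stmt10Aux.flipB d (Stmt10Aux.indF d p))) ∪
    CL.image (fun i => Stmt10Aux.midP d e (Stmt10Aux.flipB d (Stmt10Aux.dbl d i))) with hAfulldef
  have hAmem : ∀ x ∈ Afull, ∃ px, x = Stmt10Aux.midP d e px ∧ boxFRank px = S - 2 ∧
      ((∃ p, p ⊆ C ∧ p.card = 2 ∧ Stmt10Aux.flipB d px = Stmt10Aux.indF d p) ∨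
       (∃ i, i ∈ C ∧ 2 ≤ d i ∧ Stmt10Aux.flipB d px = Stmt10Aux.dbl d i)) := by
    intro x hx
    rcases mem_union.1 hx with hx' | hx'
    · obtain ⟨p, hp, rfl⟩ := mem_image.1 hx'
      obtain ⟨hpC, hp2⟩ := mem_powersetCard.1 hp
      have hri : boxFRank (Stmt10Aux.indF d p) = 2 := by rw [Stmt10Aux.rank_indF hd, hp2]
      have hrf := Stmt10Aux.rank_flipB (Stmt10Aux.indF d p)
      refine ⟨_, rfl, by omega, Or.inl ⟨p, hpC, hp2, Stmt10Aux.flipB_flipB _⟩⟩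
    · obtain ⟨i, hi, rfl⟩ := mem_image.1 hx'
      have h2i : 2 ≤ d i := (mem_filter.1 hi).2
      have hri : boxFRank (Stmt10Aux.dbl d i) = 2 := Stmt10Aux.rank_dbl i h2i
      have hrf := Stmt10Aux.rank_flipB (Stmt10Aux.dbl d i)
      exact ⟨_, rfl, by omega, Or.inr ⟨i, (mem_filter.1 hi).1, h2i, Stmt10Aux.flipB_flipB _⟩⟩
  have hAfullcard : Afull.card = (m + 2).choose 2 + CL.card := by
    rw [hAfulldef, card_union_of_disjoint, card_image_of_injOn, card_image_of_injOn,
      card_powersetCard, hCcard]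
    · intro i hi i' hi' hii
      have h2i : 2 ≤ d i := (mem_filter.1 hi).2
      have hdd := Stmt10Aux.flipB_inj (Stmt10Aux.midP_inj hii)
      by_contra hne
      have hv1 := Stmt10Aux.dbl_apply_self (f := d) i h2i
      have hv2 := Stmt10Aux.dbl_apply_ne (f := d) (show i ≠ i' from hne)
      rw [hdd] at hv1
      omega
    · intro p hp p' hp' hpp
      exact Stmt10Aux.indF_inj hd (Stmt10Aux.flipB_inj (Stmt10Aux.midP_inj hpp))
    · rw [Finset.disjoint_left]
      rintro y hy1 hy2
      obtain ⟨p, hp, rfl⟩ := mem_image.1 hy1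
      obtain ⟨i, hi, hieq⟩ := mem_image.1 hy2
      have h2i : 2 ≤ d i := (mem_filter.1 hi).2
      have hdd := Stmt10Aux.flipB_inj (Stmt10Aux.midP_inj hieq)
      have hv1 := Stmt10Aux.dbl_apply_self (f := d) i h2i
      rw [hdd] at hv1
      by_cases hip : i ∈ p
      · have := Stmt10Aux.indF_apply_mem (f := d) hip (hd i); omega
      · have := Stmt10Aux.indF_apply_not_mem (f := d) hip; omega
  -- choose the competitor A' of size t
  set j := 2 + lmin with hjdef
  clear_value j
  set t := q + j with htdef
  clear_value t
  have hchoose2 : (m + 2).choose 2 = m.choose 2 + m + m + 1 := by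
    have h1 := Stmt10Aux.choose_two_succ (m + 1)
    have h2 := Stmt10Aux.choose_two_succ m
    rw [show m + 1 + 1 = m + 2 by omega] at h1
    omega
  have htA : t ≤ Afull.card := by
    rw [hAfullcard]
    omega
  obtain ⟨A', hA'sub, hA'card⟩ := Finset.exists_subset_card_eq htA
  have hA'rank : ∀ x ∈ A', Stmt10Aux.rkD d e x = S - 2 := by
    intro x hx
    obtain ⟨px, rfl, hpr, _⟩ := hAmem x (hA'sub hx)
    rw [Stmt10Aux.rk_midP, hpr]
  -- shadow of A' is inside the coatoms over C
  set Ccoat := C.image (fun i => Stmt10Aux.midP d e (Stmt10Aux.flipB d (Stmt10Aux.sing d i)))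
    with hCcoatdef
  have hCcoatcard : Ccoat.card ≤ m + 2 := le_trans card_image_le (le_of_eq hCcard)
  have hshadA : shadow A' ⊆ Ccoat := by
    intro y hy
    obtain ⟨x, hx, hcov⟩ := Stmt10Aux.mem_shadow_iff.1 hy
    obtain ⟨hle, hr⟩ := (Stmt10Aux.covBy_iff hP hQ hsPQ).1 hcov
    obtain ⟨px, rfl, hpr, hstruct⟩ := hAmem x (hA'sub hx)
    rcases Stmt10Aux.same_side hP hQ hle with ⟨px', py, hxp, hyp, hple⟩ | ⟨qx, qy, hxq, _, _⟩
    · have hpx : px' = px := Stmt10Aux.midP_inj hxp.symm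
      subst hpx
      have hrky : boxFRank py = S - 1 := by
        rw [hyp, Stmt10Aux.rk_midP] at hr
        rw [Stmt10Aux.rk_midP, hpr] at hr
        exact hr.trans hS21
      have hflippy := Stmt10Aux.rank_flipB py
      have hfpy1 : boxFRank (Stmt10Aux.flipB d py) = 1 := by
        have hh := hflippy
        rw [hrky] at hh
        clear * - hh hSdef hS3
        omega
      obtain ⟨i0, hd0, hsingeq⟩ := Stmt10Aux.rank_one_classify hfpy1
      have hle2 : Stmt10Aux.sing d i0 ≤ Stmt10Aux.flipB d px' := by
        rw [← hsingeq]
        exact Stmt10Aux.flipB_antitone hple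
      have hi0C : i0 ∈ C := by
        rcases hstruct with ⟨p, hpC, hp2, hind⟩ | ⟨i, hiC, h2i, hdbl⟩
        · rw [hind] at hle2
          have hv := (Stmt10Aux.box_le_iff _ _).1 hle2 i0
          rw [Stmt10Aux.sing_apply_self i0 hd0] at hv
          by_cases hip : i0 ∈ p
          · exact hpC hip
          · rw [Stmt10Aux.indF_apply_not_mem hip] at hv; omega
        · rw [hdbl] at hle2
          have hv := (Stmt10Aux.box_le_iff _ _).1 hle2 i0
          rw [Stmt10Aux.sing_apply_self i0 hd0] at hv
          by_cases hii : i0 = i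
          · rw [hii]; exact hiC
          · rw [Stmt10Aux.dbl_apply_ne hii] at hv; omega
      have hpy : py = Stmt10Aux.flipB d (Stmt10Aux.sing d i0) := by
        rw [← hsingeq, Stmt10Aux.flipB_flipB]
      rw [hyp, hpy, hCcoatdef]
      exact mem_image.2 ⟨i0, hi0C, rfl⟩
    · exfalso
      refine Stmt10Aux.midQ_eq_midP_absurd hsPQ hxq.symm ?_ ?_ <;>
        rw [show boxFRank qx = S - 2 from by
          have := hxq ▸ (Stmt10Aux.rk_midQ (d := d) hsPQ qx)
          rw [Stmt10Aux.rk_midP, hpr] at this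
          omega] <;> omega
  -- the level of rank S-2 in the diamond
  have hQLlev : Stmt10Aux.QL d e (S - 2) ⊆ (univ : Finset (Diamond (BoxF d) (BoxF e))).filter
      (fun x => Stmt10Aux.rkD d e x = S - 2) := by
    intro x hx
    exact mem_filter.2 ⟨mem_univ _, Stmt10Aux.rank_of_mem_QL hsPQ hx⟩
  have hAlev : Afull ⊆ (univ : Finset (Diamond (BoxF d) (BoxF e))).filter
      (fun x => Stmt10Aux.rkD d e x = S - 2) := by
    intro x hx
    obtain ⟨px, rfl, hpr, _⟩ := hAmem x hx
    exact mem_filter.2 ⟨mem_univ _, by rw [Stmt10Aux.rk_midP, hpr]⟩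
  have hdisjQA : Disjoint (Stmt10Aux.QL d e (S - 2)) Afull := by
    rw [Finset.disjoint_left]
    intro x hx1 hx2
    obtain ⟨qy, hqyr, hxq⟩ := Stmt10Aux.mem_QL.1 hx1
    obtain ⟨px, hxp, hpr, _⟩ := hAmem x hx2
    have heq : Stmt10Aux.midQ d e qy = Stmt10Aux.midP d e px := by
      rw [← hxq]; exact hxp
    exact Stmt10Aux.midQ_eq_midP_absurd hsPQ heq (by omega) (by omega)
  have htlev : t ≤ ((univ : Finset (Diamond (BoxF d) (BoxF e))).filter
      (fun x => Stmt10Aux.rkD d e x = S - 2)).card := by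
    have h1 : (Stmt10Aux.QL d e (S - 2) ∪ Afull).card =
        (Stmt10Aux.QL d e (S - 2)).card + Afull.card := card_union_of_disjoint hdisjQA
    have h2 := card_le_card (union_subset hQLlev hAlev)
    omega
  obtain ⟨St, hStinit, hStcard⟩ :=
    Stmt10Aux.initseg_exists (Stmt10Aux.rkD d e) lt htrans hirr (S - 2) t htlev
  have hQSt : Stmt10Aux.QL d e (S - 2) ⊆ St :=
    Stmt10Aux.initseg_nested (Stmt10Aux.rkD d e) lt htri' hQLinit hStinit (by omega)
  have hPpcard : (St \ Stmt10Aux.QL d e (S - 2)).card = j := by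
    rw [card_sdiff_of_subset hQSt]
    omega
  have hPpartP : ∀ x ∈ St \ Stmt10Aux.QL d e (S - 2),
      ∃ px, boxFRank px = S - 2 ∧ x = Stmt10Aux.midP d e px := by
    intro x hx
    obtain ⟨hxSt, hxQ⟩ := mem_sdiff.1 hx
    obtain ⟨px, hp1, hp2⟩ := Stmt10Aux.not_mem_QL hP hQ hsPQ (hStinit.1 x hxSt) hxQ
    exact ⟨px, hp1, hp2⟩
  -- lower bound on the shadow of the P-part
  have hshPp : 3 ≤ (shadow (St \ Stmt10Aux.QL d e (S - 2))).card := by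
    by_contra hc
    push_neg at hc
    set K : Finset (Fin n) := univ.filter
      (fun i => Stmt10Aux.midP d e (Stmt10Aux.flipB d (Stmt10Aux.sing d i)) ∈
        shadow (St \ Stmt10Aux.QL d e (S - 2))) with hKdef
    have hKcard : K.card ≤ 2 := by
      have h1 := Finset.card_le_card_of_injOn (s := K)
        (t := shadow (St \ Stmt10Aux.QL d e (S - 2)))
        (fun i => Stmt10Aux.midP d e (Stmt10Aux.flipB d (Stmt10Aux.sing d i)))
        (fun i hi => by rw [hKdef] at hi; exact (mem_filter.1 hi).2)
        (fun i _ i' _ h => Stmt10Aux.sing_inj hd (Stmt10Aux.flipB_inj (Stmt10Aux.midP_inj h)))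
      omega
    have hcover : ∀ px, boxFRank px = S - 2 →
        Stmt10Aux.midP d e px ∈ St \ Stmt10Aux.QL d e (S - 2) →
        ∀ i0, Stmt10Aux.sing d i0 ≤ Stmt10Aux.flipB d px → i0 ∈ K := by
      intro px hpr hmem i0 hle0
      have hple : px ≤ Stmt10Aux.flipB d (Stmt10Aux.sing d i0) := by
        have h := Stmt10Aux.flipB_antitone hle0
        rwa [Stmt10Aux.flipB_flipB] at h
      have hrk : boxFRank (Stmt10Aux.flipB d (Stmt10Aux.sing d i0)) = S - 2 + 1 := by
        have h1 := Stmt10Aux.rank_flipB (Stmt10Aux.sing d i0)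
        rw [Stmt10Aux.rank_sing hd] at h1
        clear * - h1 hSdef hS3
        omega
      refine mem_filter.2 ⟨mem_univ _, ?_⟩
      rw [Stmt10Aux.mem_shadow_iff]
      exact ⟨_, hmem, Stmt10Aux.midP_covBy hP hQ hsPQ hple (by rw [hpr]; exact hrk)⟩
    have hPpB : St \ Stmt10Aux.QL d e (S - 2) ⊆
        (K.powersetCard 2).image
          (fun p => Stmt10Aux.midP d e (Stmt10Aux.flipB d (Stmt10Aux.indF d p))) ∪
        (K.filter (fun i => 2 ≤ d i)).image
          (fun i => Stmt10Aux.midP d e (Stmt10Aux.flipB d (Stmt10Aux.dbl d i))) := by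
      intro x hx
      obtain ⟨px, hpr, rfl⟩ := hPpartP x hx
      have hfl2 : boxFRank (Stmt10Aux.flipB d px) = 2 := by
        have h1 := Stmt10Aux.rank_flipB px
        rw [hpr] at h1
        clear * - h1 hSdef hS3
        omega
      rcases Stmt10Aux.rank_two_classify hfl2 with ⟨i, h2i, hdbleq⟩ | ⟨p, hp2, hp1, hindq⟩
      · have hiK : i ∈ K :=
          hcover px hpr hx i (by rw [hdbleq]; exact Stmt10Aux.sing_le_dbl)
        refine mem_union_right _ (mem_image.2 ⟨i, mem_filter.2 ⟨hiK, h2i⟩, ?_⟩)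
        rw [← hdbleq, Stmt10Aux.flipB_flipB]
      · have hpK : p ⊆ K := fun i hip =>
          hcover px hpr hx i (by rw [hindq]; exact Stmt10Aux.sing_le_indF hip)
        refine mem_union_left _ (mem_image.2 ⟨p, mem_powersetCard.2 ⟨hpK, hp2⟩, ?_⟩)
        rw [← hindq, Stmt10Aux.flipB_flipB]
    have hch : K.card.choose 2 ≤ 1 := by
      have h := Nat.choose_le_choose 2 hKcard
      simpa using h
    have hKloop : (K.filter (fun i => 2 ≤ d i)).card ≤ lmin := by
      have ha : (K.filter (fun i => 2 ≤ d i)).card ≤ 2 :=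
        le_trans (card_filter_le _ _) hKcard
      have hb : (K.filter (fun i => 2 ≤ d i)).card ≤ lam := by
        rw [hlamdef]
        refine card_le_card ?_
        intro i hi
        exact mem_filter.2 ⟨mem_univ _, (mem_filter.1 hi).2⟩
      rw [hlmin]
      exact le_min ha hb
    have hc1 := card_le_card hPpB
    have hc2 := card_union_le
      ((K.powersetCard 2).image
        (fun p => Stmt10Aux.midP d e (Stmt10Aux.flipB d (Stmt10Aux.indF d p))))
      ((K.filter (fun i => 2 ≤ d i)).image
        (fun i => Stmt10Aux.midP d e (Stmt10Aux.flipB d (Stmt10Aux.dbl d i))))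
    have hc3 := card_image_le (s := K.powersetCard 2)
      (f := fun p => Stmt10Aux.midP d e (Stmt10Aux.flipB d (Stmt10Aux.indF d p)))
    have hc4 := card_image_le (s := K.filter (fun i => 2 ≤ d i))
      (f := fun i => Stmt10Aux.midP d e (Stmt10Aux.flipB d (Stmt10Aux.dbl d i)))
    have hc5 : (K.powersetCard 2).card = K.card.choose 2 := card_powersetCard 2 K
    omega
  -- the top Q-level
  have hsq : shadow (Stmt10Aux.QL d e (S - 2)) = Stmt10Aux.QL d e (S - 2 + 1) :=
    Stmt10Aux.shadow_QL hP hQ hsPQ (by omega) (by omega)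
  rw [hS21] at hsq
  have hQL1m : (Stmt10Aux.QL d e (S - 1)).card = m := by
    have hSe1 : S - 1 = ∑ i, e i - 1 := by omega
    have hc : (Stmt10Aux.QL d e (S - 1)).card = ((univ : Finset (BoxF e)).filter
        (fun x => boxFRank x = ∑ i, e i - 1)).card := by
      rw [Stmt10Aux.card_QL, hSe1]
    have hflip := Stmt10Aux.level_flip_count (f := e) (t := ∑ i, e i - 1) (by omega)
    have h11 : ∑ i, e i - (∑ i, e i - 1) = 1 := by omega
    rw [h11] at hflip
    have hl1 := Stmt10Aux.level_one_count (f := e) he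
    omega
  have hsub1 : Stmt10Aux.QL d e (S - 1) ⊆ shadow St := by
    rw [← hsq]
    exact Stmt10Aux.shadow_mono hQSt
  have hsub2 : shadow (St \ Stmt10Aux.QL d e (S - 2)) ⊆ shadow St :=
    Stmt10Aux.shadow_mono sdiff_subset
  have hdisj2 : Disjoint (Stmt10Aux.QL d e (S - 1))
      (shadow (St \ Stmt10Aux.QL d e (S - 2))) := by
    rw [Finset.disjoint_left]
    intro y hy1 hy2
    obtain ⟨qy, hqyr, hyq⟩ := Stmt10Aux.mem_QL.1 hy1
    obtain ⟨x, hx, hcov⟩ := Stmt10Aux.mem_shadow_iff.1 hy2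
    obtain ⟨px, hpr, hxp⟩ := hPpartP x hx
    have hle := ((Stmt10Aux.covBy_iff hP hQ hsPQ).1 hcov).1
    rw [hxp, hyq] at hle
    rcases Stmt10Aux.midP_le_midQ hle with h1 | h2
    · rw [h1, Stmt10Aux.boxFRank_bot] at hpr
      omega
    · rw [h2, Stmt10Aux.boxFRank_top] at hqyr
      omega
  have hlowS : m + 3 ≤ (shadow St).card := by
    have hsubu := union_subset hsub1 hsub2
    have hcardu := card_union_of_disjoint hdisj2
    have h1 := card_le_card hsubu
    omega
  -- final contradiction via minimality
  have hfin := hmin' (S - 2) A' St hA'rank hStinit (by omega)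
  have hupA := card_le_card hshadA
  omega
end

section
/- Suppose P and Q are ranked posets with least elements such that the wedge product P wedge Q is Macaulay with respect to a total order O, and all elements of rank 1 of Q form an initial segment of P wedge Q. Then both P and Q are Macaulay with respect to the restrictions of O. -/
open Finset

variable {α : Type*}

/-! ### Auxiliary lemmas -/

section RankFacts

variable [PartialOrder α] [OrderBot α] {r : α → ℕ}

lemma rankFn_bot (h : IsRankFn r) : r ⊥ = 0 := by
  obtain ⟨x, hx0, hxle⟩ := h.1
  have : x = ⊥ := le_antisymm (hxle ⊥) bot_le
  rwa [this] at hx0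

open Classical in
lemma exists_covby_of_ne_bot [Fintype α] {x : α} (hx : x ≠ ⊥) : ∃ y, y ⋖ x := by
  obtain ⟨m, hm, hmax⟩ := (Finset.univ.filter (fun y => y < x)).exists_maximal
    ⟨⊥, by simp [bot_lt_iff_ne_bot.2 hx]⟩
  simp only [mem_filter, mem_univ, true_and] at hm
  refine ⟨m, hm, fun c hmc hcx => ?_⟩
  exact absurd (hmax (y := c) (by simp [hcx]) hmc.le) (not_le_of_gt hmc)

lemma rank_ne_zero [Fintype α] (h : IsRankFn r) {x : α} (hx : x ≠ ⊥) : r x ≠ 0 := by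
  obtain ⟨y, hy⟩ := exists_covby_of_ne_bot hx
  rw [h.2 _ _ hy]; omega

lemma eq_bot_of_rank_zero [Fintype α] (h : IsRankFn r) {x : α} (hx : r x = 0) : x = ⊥ :=
  by_contra fun hne => rank_ne_zero h hne hx

lemma exists_covby_rank [Fintype α] (h : IsRankFn r) {x : α} {d : ℕ} (hx : r x = d + 1) :
    ∃ y, y ⋖ x ∧ r y = d := by
  have hne : x ≠ ⊥ := fun he => by rw [he, rankFn_bot h] at hx; omega
  obtain ⟨y, hy⟩ := exists_covby_of_ne_bot hne
  have := h.2 _ _ hy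
  exact ⟨y, hy, by omega⟩

lemma ne_bot_of_mem_shadow [Fintype α] {A : Finset α} {x : α}
    (hx : x ∈ _root_.shadow A) : x ≠ ⊥ := by
  simp only [_root_.shadow, mem_filter] at hx
  obtain ⟨-, a, -, ha⟩ := hx
  exact fun he => (not_lt_bot (he ▸ ha.lt))

end RankFacts

lemma mem_shadow' [PartialOrder α] [Fintype α] {A : Finset α} {b : α} :
    b ∈ _root_.shadow A ↔ ∃ a ∈ A, a ⋖ b := by simp [_root_.shadow]

lemma shadow_union [PartialOrder α] [Fintype α] [DecidableEq α] (A B : Finset α) :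
    _root_.shadow (A ∪ B) = _root_.shadow A ∪ _root_.shadow B := by
  ext x; simp only [mem_shadow', mem_union]; aesop

section WedgeFacts

variable {P Q : Type*} [PartialOrder P] [PartialOrder Q] [OrderBot P] [OrderBot Q]
  {rP : P → ℕ} {rQ : Q → ℕ}

lemma wedgeInl_bot : (wedgeInl (⊥ : P) : Wedge P Q) = ⊥ := dif_pos rfl

lemma wedgeInr_bot : (wedgeInr (⊥ : Q) : Wedge P Q) = ⊥ := dif_pos rfl

lemma wedgeInl_ne {p : P} (h : p ≠ ⊥) :
    (wedgeInl p : Wedge P Q) = ((Sum.inl ⟨p, h⟩ : {p : P // p ≠ ⊥} ⊕ {q : Q // q ≠ ⊥}) : Wedge P Q) :=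
  dif_neg h

lemma wedgeInr_ne {q : Q} (h : q ≠ ⊥) :
    (wedgeInr q : Wedge P Q) = ((Sum.inr ⟨q, h⟩ : {p : P // p ≠ ⊥} ⊕ {q : Q // q ≠ ⊥}) : Wedge P Q) :=
  dif_neg h

lemma wedgeInl_inj : Function.Injective (wedgeInl : P → Wedge P Q) := by
  intro a b hab
  by_cases ha : a = ⊥ <;> by_cases hb : b = ⊥
  · rw [ha, hb]
  · rw [ha, wedgeInl_bot, wedgeInl_ne hb] at hab; exact absurd hab.symm (WithBot.coe_ne_bot)
  · rw [hb, wedgeInl_bot, wedgeInl_ne ha] at hab; exact absurd hab (WithBot.coe_ne_bot)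
  · rw [wedgeInl_ne ha, wedgeInl_ne hb] at hab
    have := WithBot.coe_injective hab
    simpa using this

lemma wedgeInr_inj : Function.Injective (wedgeInr : Q → Wedge P Q) := by
  intro a b hab
  by_cases ha : a = ⊥ <;> by_cases hb : b = ⊥
  · rw [ha, hb]
  · rw [ha, wedgeInr_bot, wedgeInr_ne hb] at hab; exact absurd hab.symm (WithBot.coe_ne_bot)
  · rw [hb, wedgeInr_bot, wedgeInr_ne ha] at hab; exact absurd hab (WithBot.coe_ne_bot)
  · rw [wedgeInr_ne ha, wedgeInr_ne hb] at hab
    have := WithBot.coe_injective hab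
    simpa using this

lemma wedgeInl_ne_wedgeInr {p : P} {q : Q} (hp : p ≠ ⊥) :
    (wedgeInl p : Wedge P Q) ≠ wedgeInr q := by
  by_cases hq : q = ⊥
  · rw [hq, wedgeInr_bot, wedgeInl_ne hp]; exact WithBot.coe_ne_bot
  · rw [wedgeInl_ne hp, wedgeInr_ne hq]
    intro h
    exact Sum.inl_ne_inr (WithBot.coe_injective h)

lemma wedgeRank_inl (hP0 : rP ⊥ = 0) (p : P) :
    wedgeRank rP rQ (wedgeInl p : Wedge P Q) = rP p := by
  by_cases h : p = ⊥
  · rw [h, wedgeInl_bot, hP0]; rfl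
  · rw [wedgeInl_ne h]; rfl

lemma wedgeRank_inr (hQ0 : rQ ⊥ = 0) (q : Q) :
    wedgeRank rP rQ (wedgeInr q : Wedge P Q) = rQ q := by
  by_cases h : q = ⊥
  · rw [h, wedgeInr_bot, hQ0]; rfl
  · rw [wedgeInr_ne h]; rfl

lemma coeSum_lt {s t : {p : P // p ≠ ⊥} ⊕ {q : Q // q ≠ ⊥}} :
    ((s : Wedge P Q) < (t : Wedge P Q)) ↔ Sum.LiftRel (· < ·) (· < ·) s t := by
  rw [WithBot.coe_lt_coe, Sum.lt_def]

lemma covBy_wedgeInl {a b : P} (hab : a ⋖ b) :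
    (wedgeInl a : Wedge P Q) ⋖ wedgeInl b := by
  have hb : b ≠ ⊥ := fun he => not_lt_bot (he ▸ hab.lt)
  rw [wedgeInl_ne hb]
  by_cases ha : a = ⊥
  · subst ha
    rw [wedgeInl_bot]
    refine ⟨WithBot.bot_lt_coe _, ?_⟩
    rintro (_ | (⟨p, hp⟩ | ⟨q, hq⟩)) h1 h2
    · exact not_lt_bot h1
    · have h2' := coeSum_lt.mp h2
      cases h2' with
      | inl h => exact hab.2 (bot_lt_iff_ne_bot.2 hp) (Subtype.mk_lt_mk.mp h)
    · have h2' := coeSum_lt.mp h2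
      cases h2'
  · rw [wedgeInl_ne ha]
    refine ⟨coeSum_lt.mpr (Sum.LiftRel.inl (Subtype.mk_lt_mk.mpr hab.lt)), ?_⟩
    rintro (_ | (⟨p, hp⟩ | ⟨q, hq⟩)) h1 h2
    · exact not_lt_bot h1
    · have h1' := coeSum_lt.mp h1
      have h2' := coeSum_lt.mp h2
      cases h1' with
      | inl h1'' => cases h2' with
        | inl h2'' => exact hab.2 (Subtype.mk_lt_mk.mp h1'') (Subtype.mk_lt_mk.mp h2'')
    · have h1' := coeSum_lt.mp h1
      cases h1'

lemma covBy_wedgeInr {a b : Q} (hab : a ⋖ b) :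
    (wedgeInr a : Wedge P Q) ⋖ wedgeInr b := by
  have hb : b ≠ ⊥ := fun he => not_lt_bot (he ▸ hab.lt)
  rw [wedgeInr_ne hb]
  by_cases ha : a = ⊥
  · subst ha
    rw [wedgeInr_bot]
    refine ⟨WithBot.bot_lt_coe _, ?_⟩
    rintro (_ | (⟨p, hp⟩ | ⟨q, hq⟩)) h1 h2
    · exact not_lt_bot h1
    · have h2' := coeSum_lt.mp h2
      cases h2'
    · have h2' := coeSum_lt.mp h2
      cases h2' with
      | inr h => exact hab.2 (bot_lt_iff_ne_bot.2 hq) (Subtype.mk_lt_mk.mp h)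
  · rw [wedgeInr_ne ha]
    refine ⟨coeSum_lt.mpr (Sum.LiftRel.inr (Subtype.mk_lt_mk.mpr hab.lt)), ?_⟩
    rintro (_ | (⟨p, hp⟩ | ⟨q, hq⟩)) h1 h2
    · exact not_lt_bot h1
    · have h1' := coeSum_lt.mp h1
      cases h1'
    · have h1' := coeSum_lt.mp h1
      have h2' := coeSum_lt.mp h2
      cases h1' with
      | inr h1'' => cases h2' with
        | inr h2'' => exact hab.2 (Subtype.mk_lt_mk.mp h1'') (Subtype.mk_lt_mk.mp h2'')

lemma covBy_of_inl {x : {p : P // p ≠ ⊥}} {c : Wedge P Q}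
    (h : ((Sum.inl x : {p : P // p ≠ ⊥} ⊕ {q : Q // q ≠ ⊥}) : Wedge P Q) ⋖ c) :
    ∃ y : {p : P // p ≠ ⊥}, c = ((Sum.inl y : {p : P // p ≠ ⊥} ⊕ {q : Q // q ≠ ⊥}) : Wedge P Q)
      ∧ x.1 ⋖ y.1 := by
  have hlt := h.lt
  rcases c with _ | (y | y)
  · exact absurd hlt not_lt_bot
  · refine ⟨y, rfl, ?_⟩
    have hlt' := coeSum_lt.mp hlt
    cases hlt' with
    | inl hxy =>
      refine ⟨Subtype.coe_lt_coe.mpr hxy, fun z h1 h2 => ?_⟩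
      have hz : z ≠ ⊥ := fun he => (x.2 (le_bot_iff.1 (le_of_lt (he ▸ h1)))).elim
      have hl1 : ((Sum.inl x : {p : P // p ≠ ⊥} ⊕ {q : Q // q ≠ ⊥}) : Wedge P Q)
          < ((Sum.inl ⟨z, hz⟩ : {p : P // p ≠ ⊥} ⊕ {q : Q // q ≠ ⊥}) : Wedge P Q) :=
        coeSum_lt.mpr (Sum.LiftRel.inl (Subtype.coe_lt_coe.mp h1))
      have hl2 : ((Sum.inl ⟨z, hz⟩ : {p : P // p ≠ ⊥} ⊕ {q : Q // q ≠ ⊥}) : Wedge P Q)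
          < ((Sum.inl y : {p : P // p ≠ ⊥} ⊕ {q : Q // q ≠ ⊥}) : Wedge P Q) :=
        coeSum_lt.mpr (Sum.LiftRel.inl (Subtype.coe_lt_coe.mp h2))
      exact h.2 hl1 hl2
  · have hlt' := coeSum_lt.mp hlt
    cases hlt'

lemma covBy_of_inr {x : {q : Q // q ≠ ⊥}} {c : Wedge P Q}
    (h : ((Sum.inr x : {p : P // p ≠ ⊥} ⊕ {q : Q // q ≠ ⊥}) : Wedge P Q) ⋖ c) :
    ∃ y : {q : Q // q ≠ ⊥}, c = ((Sum.inr y : {p : P // p ≠ ⊥} ⊕ {q : Q // q ≠ ⊥}) : Wedge P Q)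
      ∧ x.1 ⋖ y.1 := by
  have hlt := h.lt
  rcases c with _ | (y | y)
  · exact absurd hlt not_lt_bot
  · have hlt' := coeSum_lt.mp hlt
    cases hlt'
  · refine ⟨y, rfl, ?_⟩
    have hlt' := coeSum_lt.mp hlt
    cases hlt' with
    | inr hxy =>
      refine ⟨Subtype.coe_lt_coe.mpr hxy, fun z h1 h2 => ?_⟩
      have hz : z ≠ ⊥ := fun he => (x.2 (le_bot_iff.1 (le_of_lt (he ▸ h1)))).elim
      have hl1 : ((Sum.inr x : {p : P // p ≠ ⊥} ⊕ {q : Q // q ≠ ⊥}) : Wedge P Q)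
          < ((Sum.inr ⟨z, hz⟩ : {p : P // p ≠ ⊥} ⊕ {q : Q // q ≠ ⊥}) : Wedge P Q) :=
        coeSum_lt.mpr (Sum.LiftRel.inr (Subtype.coe_lt_coe.mp h1))
      have hl2 : ((Sum.inr ⟨z, hz⟩ : {p : P // p ≠ ⊥} ⊕ {q : Q // q ≠ ⊥}) : Wedge P Q)
          < ((Sum.inr y : {p : P // p ≠ ⊥} ⊕ {q : Q // q ≠ ⊥}) : Wedge P Q) :=
        coeSum_lt.mpr (Sum.LiftRel.inr (Subtype.coe_lt_coe.mp h2))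
      exact h.2 hl1 hl2

lemma covBy_of_bot {c : Wedge P Q} (h : (⊥ : Wedge P Q) ⋖ c) :
    (∃ y : {p : P // p ≠ ⊥}, c = ((Sum.inl y : {p : P // p ≠ ⊥} ⊕ {q : Q // q ≠ ⊥}) : Wedge P Q)
      ∧ (⊥ : P) ⋖ y.1) ∨
    (∃ y : {q : Q // q ≠ ⊥}, c = ((Sum.inr y : {p : P // p ≠ ⊥} ⊕ {q : Q // q ≠ ⊥}) : Wedge P Q)
      ∧ (⊥ : Q) ⋖ y.1) := by
  have hlt := h.lt
  rcases c with _ | (y | y)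
  · exact absurd hlt (lt_irrefl _)
  · left
    refine ⟨y, rfl, bot_lt_iff_ne_bot.2 y.2, fun z h1 h2 => ?_⟩
    have hz : z ≠ ⊥ := bot_lt_iff_ne_bot.1 h1
    have hl2 : ((Sum.inl ⟨z, hz⟩ : {p : P // p ≠ ⊥} ⊕ {q : Q // q ≠ ⊥}) : Wedge P Q)
        < ((Sum.inl y : {p : P // p ≠ ⊥} ⊕ {q : Q // q ≠ ⊥}) : Wedge P Q) :=
      coeSum_lt.mpr (Sum.LiftRel.inl (Subtype.coe_lt_coe.mp h2))
    exact h.2 (WithBot.bot_lt_coe _) hl2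
  · right
    refine ⟨y, rfl, bot_lt_iff_ne_bot.2 y.2, fun z h1 h2 => ?_⟩
    have hz : z ≠ ⊥ := bot_lt_iff_ne_bot.1 h1
    have hl2 : ((Sum.inr ⟨z, hz⟩ : {p : P // p ≠ ⊥} ⊕ {q : Q // q ≠ ⊥}) : Wedge P Q)
        < ((Sum.inr y : {p : P // p ≠ ⊥} ⊕ {q : Q // q ≠ ⊥}) : Wedge P Q) :=
      coeSum_lt.mpr (Sum.LiftRel.inr (Subtype.coe_lt_coe.mp h2))
    exact h.2 (WithBot.bot_lt_coe _) hl2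

lemma wedge_cov_rank (hrP : IsRankFn rP) (hrQ : IsRankFn rQ) {a b : Wedge P Q}
    (h : a ⋖ b) : wedgeRank rP rQ b = wedgeRank rP rQ a + 1 := by
  rcases a with _ | (x | x)
  · rcases covBy_of_bot h with ⟨y, rfl, hy⟩ | ⟨y, rfl, hy⟩
    · show rP y.1 = 0 + 1
      rw [hrP.2 _ _ hy, rankFn_bot hrP]
    · show rQ y.1 = 0 + 1
      rw [hrQ.2 _ _ hy, rankFn_bot hrQ]
  · obtain ⟨y, rfl, hy⟩ := covBy_of_inl h
    exact hrP.2 _ _ hy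
  · obtain ⟨y, rfl, hy⟩ := covBy_of_inr h
    exact hrQ.2 _ _ hy

variable [Fintype P] [Fintype Q]

open Classical in
lemma shadow_image_inl [DecidableEq (Wedge P Q)] {X : Finset P} (hX : ∀ x ∈ X, x ≠ ⊥) :
    _root_.shadow (X.image (wedgeInl : P → Wedge P Q)) = (_root_.shadow X).image wedgeInl := by
  ext b
  simp only [mem_shadow', mem_image]
  constructor
  · rintro ⟨a, ⟨x, hxX, rfl⟩, hcov⟩
    rw [wedgeInl_ne (hX x hxX)] at hcov
    obtain ⟨y, rfl, hxy⟩ := covBy_of_inl hcov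
    exact ⟨y.1, ⟨x, hxX, hxy⟩, wedgeInl_ne y.2⟩
  · rintro ⟨y, ⟨x, hxX, hxy⟩, rfl⟩
    exact ⟨wedgeInl x, ⟨x, hxX, rfl⟩, covBy_wedgeInl hxy⟩

open Classical in
lemma shadow_image_inr [DecidableEq (Wedge P Q)] {X : Finset Q} (hX : ∀ x ∈ X, x ≠ ⊥) :
    _root_.shadow (X.image (wedgeInr : Q → Wedge P Q)) = (_root_.shadow X).image wedgeInr := by
  ext b
  simp only [mem_shadow', mem_image]
  constructor
  · rintro ⟨a, ⟨x, hxX, rfl⟩, hcov⟩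
    rw [wedgeInr_ne (hX x hxX)] at hcov
    obtain ⟨y, rfl, hxy⟩ := covBy_of_inr hcov
    exact ⟨y.1, ⟨x, hxX, hxy⟩, wedgeInr_ne y.2⟩
  · rintro ⟨y, ⟨x, hxX, hxy⟩, rfl⟩
    exact ⟨wedgeInr x, ⟨x, hxX, rfl⟩, covBy_wedgeInr hxy⟩

open Classical in
noncomputable def QLev (rP : P → ℕ) (rQ : Q → ℕ) (d : ℕ) : Finset (Wedge P Q) :=
  Finset.univ.filter (fun x => wedgeRank rP rQ x = d ∧ ∃ q : Q, x = wedgeInr q)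

lemma mem_QLev {d : ℕ} {x : Wedge P Q} :
    x ∈ QLev rP rQ d ↔ wedgeRank rP rQ x = d ∧ ∃ q : Q, x = wedgeInr q := by
  simp [QLev]

lemma disj_image_inl_QLev [DecidableEq (Wedge P Q)] (rP : P → ℕ) (rQ : Q → ℕ) {X : Finset P} (hX : ∀ x ∈ X, x ≠ ⊥) (d : ℕ) :
    Disjoint (X.image (wedgeInl : P → Wedge P Q)) (QLev rP rQ d) := by
  rw [Finset.disjoint_left]
  rintro z hz1 hz2
  obtain ⟨x, hx, rfl⟩ := mem_image.1 hz1
  obtain ⟨-, q, he⟩ := mem_QLev.1 hz2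
  exact wedgeInl_ne_wedgeInr (hX x hx) he

open Classical in
lemma shadow_QLev (hrP : IsRankFn rP) (hrQ : IsRankFn rQ) {d : ℕ} (hd : 1 ≤ d) :
    _root_.shadow (QLev rP rQ d) = QLev rP rQ (d + 1) := by
  ext b
  rw [mem_shadow', mem_QLev]
  constructor
  · rintro ⟨a, ha, hcov⟩
    obtain ⟨hrank, q, rfl⟩ := mem_QLev.1 ha
    have hq : q ≠ ⊥ := by
      rintro rfl
      rw [wedgeInr_bot] at hrank
      have h0 : (0 : ℕ) = d := hrank
      omega
    have hrk := wedge_cov_rank hrP hrQ hcov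
    rw [hrank] at hrk
    refine ⟨hrk, ?_⟩
    rw [wedgeInr_ne hq] at hcov
    obtain ⟨y, rfl, -⟩ := covBy_of_inr hcov
    exact ⟨y.1, (wedgeInr_ne y.2).symm⟩
  · rintro ⟨hrank, q, rfl⟩
    have hq : q ≠ ⊥ := by
      rintro rfl
      rw [wedgeInr_bot] at hrank
      have h0 : (0 : ℕ) = d + 1 := hrank
      omega
    have hrq : rQ q = d + 1 := by
      rw [wedgeRank_inr (rankFn_bot hrQ)] at hrank; exact hrank
    obtain ⟨y, hyq, hyd⟩ := exists_covby_rank hrQ hrq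
    have hy : y ≠ ⊥ := fun he => by
      rw [he, rankFn_bot hrQ] at hyd; omega
    refine ⟨wedgeInr y, ?_, covBy_wedgeInr hyq⟩
    exact mem_QLev.2 ⟨by rw [wedgeRank_inr (rankFn_bot hrQ)]; exact hyd, y, rfl⟩

end WedgeFacts

lemma wedge_cases {P Q : Type*} [PartialOrder P] [PartialOrder Q] [OrderBot P] [OrderBot Q]
    (b : Wedge P Q) (hb : b ≠ ⊥) :
    (∃ p : P, p ≠ ⊥ ∧ b = wedgeInl p) ∨ (∃ q : Q, q ≠ ⊥ ∧ b = wedgeInr q) := by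
  rcases b with _ | (y | y)
  · exact absurd rfl hb
  · exact Or.inl ⟨y.1, y.2, (wedgeInl_ne y.2).symm⟩
  · exact Or.inr ⟨y.1, y.2, (wedgeInr_ne y.2).symm⟩

open Classical in
/-- If the wedge of ranked posets P and Q is Macaulay with respect to a total order under
which the rank-1 elements of Q form an initial segment, then P and Q are Macaulay with
respect to the restricted orders. -/
theorem stmt13 {P Q : Type*} [PartialOrder P] [PartialOrder Q] [OrderBot P] [OrderBot Q]
    [Fintype P] [Fintype Q] (rP : P → ℕ) (rQ : Q → ℕ)
    (hrP : IsRankFn rP) (hrQ : IsRankFn rQ)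
    (lt : Wedge P Q → Wedge P Q → Prop)
    (hM : MacaulayWith (wedgeRank rP rQ) lt)
    (hseg : IsInitSeg (wedgeRank rP rQ) lt 1
      (Finset.univ.filter (fun x => wedgeRank rP rQ x = 1 ∧ ∃ q : Q, x = wedgeInr q))) :
    MacaulayWith rP (fun a b => lt (wedgeInl a) (wedgeInl b)) ∧
    MacaulayWith rQ (fun a b => lt (wedgeInr a) (wedgeInr b)) := by
  classical
  have hP0 : rP ⊥ = 0 := rankFn_bot hrP
  have hQ0 : rQ ⊥ = 0 := rankFn_bot hrQ
  obtain ⟨⟨htri⟩, ⟨htrans⟩, ⟨hirr⟩, hmin, hsh⟩ := hM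
  have hseg' : IsInitSeg (wedgeRank rP rQ) lt 1 (QLev rP rQ 1) := hseg
  have hQlev : ∀ d : ℕ, 1 ≤ d → IsInitSeg (wedgeRank rP rQ) lt d (QLev rP rQ d) := by
    intro d
    induction d with
    | zero => exact fun h => absurd h (by omega)
    | succ n ih =>
      intro _
      rcases Nat.eq_zero_or_pos n with hn | hn
      · subst hn; exact hseg'
      · have h2 := hsh n _ (ih hn)
        rwa [shadow_QLev hrP hrQ hn] at h2
  constructor
  · -- P is Macaulay
    refine ⟨⟨fun a b => ?_⟩, ⟨fun a b c hab hbc => htrans _ _ _ hab hbc⟩,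
      ⟨fun a => hirr _⟩, ?_, ?_⟩
    · intro h1 h2
      exact wedgeInl_inj (htri (wedgeInl a) (wedgeInl b) h1 h2)
    · -- shadow minimality
      intro d A S hA hS hcard
      cases d with
      | zero =>
        have hA1 : A ⊆ {⊥} := fun x hx => mem_singleton.2 (eq_bot_of_rank_zero hrP (hA x hx))
        have hS1 : S ⊆ {⊥} := fun x hx => mem_singleton.2 (eq_bot_of_rank_zero hrP (hS.1 x hx))
        rcases Finset.subset_singleton_iff.1 hA1 with rfl | rfl <;>
          rcases Finset.subset_singleton_iff.1 hS1 with rfl | rfl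
        · exact le_refl _
        · simp at hcard
        · simp at hcard
        · exact le_refl _
      | succ e =>
        have hAne : ∀ x ∈ A, x ≠ ⊥ := by
          intro x hx he
          have := hA x hx
          rw [he, hP0] at this
          omega
        have hSne : ∀ x ∈ S, x ≠ ⊥ := by
          intro x hx he
          have := hS.1 x hx
          rw [he, hP0] at this
          omega
        set A' := A.image (wedgeInl : P → Wedge P Q) ∪ QLev rP rQ (e+1) with hA'def
        set S' := S.image (wedgeInl : P → Wedge P Q) ∪ QLev rP rQ (e+1) with hS'def
        have hrA' : ∀ x ∈ A', wedgeRank rP rQ x = e+1 := by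
          intro x hx
          rcases mem_union.1 hx with hx | hx
          · obtain ⟨a, ha, rfl⟩ := mem_image.1 hx
            rw [wedgeRank_inl hP0]; exact hA a ha
          · exact (mem_QLev.1 hx).1
        have hrS' : ∀ x ∈ S', wedgeRank rP rQ x = e+1 := by
          intro x hx
          rcases mem_union.1 hx with hx | hx
          · obtain ⟨a, ha, rfl⟩ := mem_image.1 hx
            rw [wedgeRank_inl hP0]; exact hS.1 a ha
          · exact (mem_QLev.1 hx).1
        have hinit : IsInitSeg (wedgeRank rP rQ) lt (e+1) S' := by
          refine ⟨hrS', ?_⟩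
          intro a ha b hb hlt
          rcases mem_union.1 ha with ha' | ha'
          · obtain ⟨s, hs, rfl⟩ := mem_image.1 ha'
            have hbne : b ≠ ⊥ := by
              rintro rfl
              have h0 : (0 : ℕ) = e + 1 := hb
              omega
            rcases wedge_cases b hbne with ⟨p, hp, rfl⟩ | ⟨q, hq, rfl⟩
            · have hrb : rP p = e + 1 := by rw [wedgeRank_inl hP0] at hb; exact hb
              exact mem_union_left _ (mem_image_of_mem _ (hS.2 s hs p hrb hlt))
            · exact mem_union_right _ (mem_QLev.2 ⟨hb, q, rfl⟩)
          · exact mem_union_right _ ((hQlev (e+1) (by omega)).2 a ha' b hb hlt)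
        have hdisjA := disj_image_inl_QLev rP rQ hAne (e+1)
        have hdisjS := disj_image_inl_QLev rP rQ hSne (e+1)
        have hcA : A'.card = A.card + (QLev rP rQ (e+1)).card := by
          rw [hA'def, card_union_of_disjoint hdisjA, card_image_of_injective _ wedgeInl_inj]
        have hcS : S'.card = S.card + (QLev rP rQ (e+1)).card := by
          rw [hS'def, card_union_of_disjoint hdisjS, card_image_of_injective _ wedgeInl_inj]
        have hmain := hmin (e+1) A' S' hrA' hinit (by rw [hcS, hcA, hcard])
        have hshA : _root_.shadow A' = (_root_.shadow A).image wedgeInl ∪ QLev rP rQ (e+1+1) := by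
          rw [hA'def, shadow_union, shadow_image_inl hAne, shadow_QLev hrP hrQ (by omega)]
        have hshS : _root_.shadow S' = (_root_.shadow S).image wedgeInl ∪ QLev rP rQ (e+1+1) := by
          rw [hS'def, shadow_union, shadow_image_inl hSne, shadow_QLev hrP hrQ (by omega)]
        have hdisjA2 := disj_image_inl_QLev rP rQ
          (fun x hx => ne_bot_of_mem_shadow (A := A) hx) (e+1+1)
        have hdisjS2 := disj_image_inl_QLev rP rQ
          (fun x hx => ne_bot_of_mem_shadow (A := S) hx) (e+1+1)
        have hcA2 : (_root_.shadow A').card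
            = (_root_.shadow A).card + (QLev rP rQ (e+1+1)).card := by
          rw [hshA, card_union_of_disjoint hdisjA2, card_image_of_injective _ wedgeInl_inj]
        have hcS2 : (_root_.shadow S').card
            = (_root_.shadow S).card + (QLev rP rQ (e+1+1)).card := by
          rw [hshS, card_union_of_disjoint hdisjS2, card_image_of_injective _ wedgeInl_inj]
        rw [hcA2, hcS2] at hmain
        omega
    · -- shadow of initial segment
      intro d S hS
      cases d with
      | zero =>
        have hS1 : S ⊆ {⊥} := fun x hx => mem_singleton.2 (eq_bot_of_rank_zero hrP (hS.1 x hx))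
        constructor
        · intro x hx
          obtain ⟨a, ha, hc⟩ := mem_shadow'.1 hx
          have ha' : a = ⊥ := mem_singleton.1 (hS1 ha)
          rw [hrP.2 a x hc, ha', hP0]
        · intro a ha b hb _
          obtain ⟨a0, ha0, -⟩ := mem_shadow'.1 ha
          have ha0' : a0 = ⊥ := mem_singleton.1 (hS1 ha0)
          obtain ⟨y, hy, hy0⟩ := exists_covby_rank hrP hb
          have hy' : y = ⊥ := eq_bot_of_rank_zero hrP hy0
          exact mem_shadow'.2 ⟨⊥, ha0' ▸ ha0, hy' ▸ hy⟩
      | succ e =>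
        have hSne : ∀ x ∈ S, x ≠ ⊥ := by
          intro x hx he
          have := hS.1 x hx
          rw [he, hP0] at this
          omega
        set S' := S.image (wedgeInl : P → Wedge P Q) ∪ QLev rP rQ (e+1) with hS'def
        have hrS' : ∀ x ∈ S', wedgeRank rP rQ x = e+1 := by
          intro x hx
          rcases mem_union.1 hx with hx | hx
          · obtain ⟨a, ha, rfl⟩ := mem_image.1 hx
            rw [wedgeRank_inl hP0]; exact hS.1 a ha
          · exact (mem_QLev.1 hx).1
        have hinit : IsInitSeg (wedgeRank rP rQ) lt (e+1) S' := by
          refine ⟨hrS', ?_⟩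
          intro a ha b hb hlt
          rcases mem_union.1 ha with ha' | ha'
          · obtain ⟨s, hs, rfl⟩ := mem_image.1 ha'
            have hbne : b ≠ ⊥ := by
              rintro rfl
              have h0 : (0 : ℕ) = e + 1 := hb
              omega
            rcases wedge_cases b hbne with ⟨p, hp, rfl⟩ | ⟨q, hq, rfl⟩
            · have hrb : rP p = e + 1 := by rw [wedgeRank_inl hP0] at hb; exact hb
              exact mem_union_left _ (mem_image_of_mem _ (hS.2 s hs p hrb hlt))
            · exact mem_union_right _ (mem_QLev.2 ⟨hb, q, rfl⟩)
          · exact mem_union_right _ ((hQlev (e+1) (by omega)).2 a ha' b hb hlt)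
        have h5 := hsh (e+1) S' hinit
        have hshS : _root_.shadow S' = (_root_.shadow S).image wedgeInl ∪ QLev rP rQ (e+1+1) := by
          rw [hS'def, shadow_union, shadow_image_inl hSne, shadow_QLev hrP hrQ (by omega)]
        rw [hshS] at h5
        constructor
        · intro x hx
          obtain ⟨a, ha, hc⟩ := mem_shadow'.1 hx
          rw [hrP.2 a x hc, hS.1 a ha]
        · intro a ha b hb hlt
          have h1 : wedgeInl a ∈ (_root_.shadow S).image wedgeInl ∪ QLev rP rQ (e+1+1) :=
            mem_union_left _ (mem_image_of_mem _ ha)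
          have h2 := h5.2 _ h1 (wedgeInl b) (by rw [wedgeRank_inl hP0]; exact hb) hlt
          have hbne : b ≠ ⊥ := by intro he; rw [he, hP0] at hb; omega
          rcases mem_union.1 h2 with h3 | h3
          · obtain ⟨y, hy, he⟩ := mem_image.1 h3
            rwa [← wedgeInl_inj he]
          · obtain ⟨-, q, he⟩ := mem_QLev.1 h3
            exact absurd he (wedgeInl_ne_wedgeInr hbne)
  · -- Q is Macaulay
    refine ⟨⟨fun a b => ?_⟩, ⟨fun a b c hab hbc => htrans _ _ _ hab hbc⟩,
      ⟨fun a => hirr _⟩, ?_, ?_⟩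
    · intro h1 h2
      exact wedgeInr_inj (htri (wedgeInr a) (wedgeInr b) h1 h2)
    · intro d A S hA hS hcard
      cases d with
      | zero =>
        have hA1 : A ⊆ {⊥} := fun x hx => mem_singleton.2 (eq_bot_of_rank_zero hrQ (hA x hx))
        have hS1 : S ⊆ {⊥} := fun x hx => mem_singleton.2 (eq_bot_of_rank_zero hrQ (hS.1 x hx))
        rcases Finset.subset_singleton_iff.1 hA1 with rfl | rfl <;>
          rcases Finset.subset_singleton_iff.1 hS1 with rfl | rfl
        · exact le_refl _
        · simp at hcard
        · simp at hcard
        · exact le_refl _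
      | succ e =>
        have hAne : ∀ x ∈ A, x ≠ ⊥ := by
          intro x hx he
          have := hA x hx
          rw [he, hQ0] at this
          omega
        have hSne : ∀ x ∈ S, x ≠ ⊥ := by
          intro x hx he
          have := hS.1 x hx
          rw [he, hQ0] at this
          omega
        have hrA' : ∀ x ∈ A.image (wedgeInr : Q → Wedge P Q), wedgeRank rP rQ x = e+1 := by
          intro x hx
          obtain ⟨a, ha, rfl⟩ := mem_image.1 hx
          rw [wedgeRank_inr hQ0]; exact hA a ha
        have hinit : IsInitSeg (wedgeRank rP rQ) lt (e+1)
            (S.image (wedgeInr : Q → Wedge P Q)) := by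
          constructor
          · intro x hx
            obtain ⟨a, ha, rfl⟩ := mem_image.1 hx
            rw [wedgeRank_inr hQ0]; exact hS.1 a ha
          · intro a ha b hb hlt
            obtain ⟨s, hs, rfl⟩ := mem_image.1 ha
            have haQ : wedgeInr s ∈ QLev rP rQ (e+1) :=
              mem_QLev.2 ⟨by rw [wedgeRank_inr hQ0]; exact hS.1 s hs, s, rfl⟩
            have hbQ := (hQlev (e+1) (by omega)).2 _ haQ b hb hlt
            obtain ⟨hbr, q, rfl⟩ := mem_QLev.1 hbQ
            have hrq : rQ q = e+1 := by rw [wedgeRank_inr hQ0] at hbr; exact hbr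
            exact mem_image_of_mem _ (hS.2 s hs q hrq hlt)
        have hmain := hmin (e+1) (A.image wedgeInr) (S.image wedgeInr) hrA' hinit
          (by rw [card_image_of_injective _ wedgeInr_inj,
                card_image_of_injective _ wedgeInr_inj, hcard])
        rw [shadow_image_inr hSne, shadow_image_inr hAne,
          card_image_of_injective _ wedgeInr_inj,
          card_image_of_injective _ wedgeInr_inj] at hmain
        exact hmain
    · intro d S hS
      cases d with
      | zero =>
        have hS1 : S ⊆ {⊥} := fun x hx => mem_singleton.2 (eq_bot_of_rank_zero hrQ (hS.1 x hx))
        constructor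
        · intro x hx
          obtain ⟨a, ha, hc⟩ := mem_shadow'.1 hx
          have ha' : a = ⊥ := mem_singleton.1 (hS1 ha)
          rw [hrQ.2 a x hc, ha', hQ0]
        · intro a ha b hb _
          obtain ⟨a0, ha0, -⟩ := mem_shadow'.1 ha
          have ha0' : a0 = ⊥ := mem_singleton.1 (hS1 ha0)
          obtain ⟨y, hy, hy0⟩ := exists_covby_rank hrQ hb
          have hy' : y = ⊥ := eq_bot_of_rank_zero hrQ hy0
          exact mem_shadow'.2 ⟨⊥, ha0' ▸ ha0, hy' ▸ hy⟩
      | succ e =>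
        have hSne : ∀ x ∈ S, x ≠ ⊥ := by
          intro x hx he
          have := hS.1 x hx
          rw [he, hQ0] at this
          omega
        have hinit : IsInitSeg (wedgeRank rP rQ) lt (e+1)
            (S.image (wedgeInr : Q → Wedge P Q)) := by
          constructor
          · intro x hx
            obtain ⟨a, ha, rfl⟩ := mem_image.1 hx
            rw [wedgeRank_inr hQ0]; exact hS.1 a ha
          · intro a ha b hb hlt
            obtain ⟨s, hs, rfl⟩ := mem_image.1 ha
            have haQ : wedgeInr s ∈ QLev rP rQ (e+1) :=
              mem_QLev.2 ⟨by rw [wedgeRank_inr hQ0]; exact hS.1 s hs, s, rfl⟩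
            have hbQ := (hQlev (e+1) (by omega)).2 _ haQ b hb hlt
            obtain ⟨hbr, q, rfl⟩ := mem_QLev.1 hbQ
            have hrq : rQ q = e+1 := by rw [wedgeRank_inr hQ0] at hbr; exact hbr
            exact mem_image_of_mem _ (hS.2 s hs q hrq hlt)
        have h5 := hsh (e+1) (S.image wedgeInr) hinit
        rw [shadow_image_inr hSne] at h5
        constructor
        · intro x hx
          obtain ⟨a, ha, hc⟩ := mem_shadow'.1 hx
          rw [hrQ.2 a x hc, hS.1 a ha]
        · intro a ha b hb hlt
          have h2 := h5.2 (wedgeInr a) (mem_image_of_mem _ ha) (wedgeInr b)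
            (by rw [wedgeRank_inr hQ0]; exact hb) hlt
          obtain ⟨y, hy, he⟩ := mem_image.1 h2
          rwa [← wedgeInr_inj he]
end
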